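/- arXiv:1503.06484 — 5 statements merged into one kernel-verified Lean document; each statement's English description precedes it below -/
import Mathlib

section
/- The set S = {u ∈ ℝ^{2p(m²+n²+mn)} : Ĥ u = r} is nonempty, and with μ = inf{‖u‖₂ : u ∈ S}, the normwise backward error satisfies μ/√(6p) ≤ η ≤ μ. -/
open Matrix
open scoped Kronecker

noncomputable section

/-- column-stacking `vec` of a matrix, indexed by (column, row). -/
def vecM {a b : ℕ} (M : Matrix (Fin a) (Fin b) ℝ) : Fin b × Fin a → ℝ :=
  fun ji => M ji.2 ji.1

/-- Euclidean norm of a finitely-indexed real vector. -/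
def l2norm {ι : Type*} [Fintype ι] (v : ι → ℝ) : ℝ :=
  Real.sqrt (∑ i, v i ^ 2)

/-- Frobenius norm of a real matrix. -/
def frob {ι κ : Type*} [Fintype ι] [Fintype κ] (M : Matrix ι κ ℝ) : ℝ :=
  Real.sqrt (∑ i, ∑ j, M i j ^ 2)

/-- Spectral norm of a real matrix: supremum of `‖M v‖₂` over the closed unit ball. -/
def specNorm {ι κ : Type*} [Fintype ι] [Fintype κ] (M : Matrix ι κ ℝ) : ℝ :=
  sSup ((fun v => l2norm (M.mulVec v)) '' {v | l2norm v ≤ 1})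

/-- sup-norm (`‖·‖∞`) of a finitely-indexed real vector. -/
def linf {ι : Type*} [Fintype ι] (v : ι → ℝ) : ℝ := ⨆ i, |v i|

/-- max-row-sum (∞-operator) norm of a real matrix. -/
def rowSumNorm {ι κ : Type*} [Fintype ι] [Fintype κ] (M : Matrix ι κ ℝ) : ℝ :=
  ⨆ i, ∑ j, |M i j|

/-- max-norm (`‖·‖_max`) of a real matrix. -/
def maxNorm {ι κ : Type*} [Fintype ι] [Fintype κ] (M : Matrix ι κ ℝ) : ℝ :=
  ⨆ i, ⨆ j, |M i j|

/-- entrywise absolute value of a matrix. -/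
def matAbs {ι κ : Type*} (M : Matrix ι κ ℝ) : Matrix ι κ ℝ := M.map (fun x => |x|)

/-- spectral radius (maximum modulus of the complex eigenvalues) of a real square matrix. -/
def specRad {ι : Type*} [Fintype ι] [DecidableEq ι] (M : Matrix ι ι ℝ) : ENNReal :=
  spectralRadius ℂ (M.map (fun x => (x : ℂ)))

/-- index type for the stacked vector `z = (vec X₁; vec Y₁; …; vec X_p; vec Y_p)`:
component `(k, 0, ·)` holds `vec X_k` and `(k, 1, ·)` holds `vec Y_k`. -/
abbrev BIdx (m n p : ℕ) := Fin p × Fin 2 × Fin n × Fin m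

/-- index type for the vec'd data `(vec A_k; vec B_k; vec E_k; vec C_k; vec D_k; vec F_k)`
of one period. -/
abbrev CIdx (m n : ℕ) :=
  (Fin m × Fin m) ⊕ (Fin n × Fin n) ⊕ (Fin n × Fin m) ⊕
  (Fin m × Fin m) ⊕ (Fin n × Fin n) ⊕ (Fin n × Fin m)

variable {m n p : ℕ}

/-- the stacked vector `(vec X₁; vec Y₁; …; vec X_p; vec Y_p)`. -/
def bigVec (X Y : Fin p → Matrix (Fin m) (Fin n) ℝ) : BIdx m n p → ℝ :=
  fun x => if x.2.1 = 0 then vecM (X x.1) x.2.2 else vecM (Y x.1) x.2.2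

/-- the coefficient matrix `W` of the PGCS equation: block row `(k,0)` has `Iₙ ⊗ A_k` in
block column `(k,0)` and `−(B_kᵀ ⊗ Iₘ)` in block column `(k,1)`; block row `(k,1)` has
`Iₙ ⊗ C_k` in block column `(k+1 mod p, 0)` and `−(D_kᵀ ⊗ Iₘ)` in block column `(k,1)`. -/
def Wmat [NeZero p] (A C : Fin p → Matrix (Fin m) (Fin m) ℝ)
    (B D : Fin p → Matrix (Fin n) (Fin n) ℝ) :
    Matrix (BIdx m n p) (BIdx m n p) ℝ :=
  Matrix.of fun x y =>
    if x.2.1 = 0 then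
      (if y.1 = x.1 ∧ y.2.1 = 0 then
        ((1 : Matrix (Fin n) (Fin n) ℝ) ⊗ₖ A x.1) x.2.2 y.2.2 else 0) +
      (if y.1 = x.1 ∧ y.2.1 = 1 then
        (-((B x.1)ᵀ ⊗ₖ (1 : Matrix (Fin m) (Fin m) ℝ))) x.2.2 y.2.2 else 0)
    else
      (if y.1 = x.1 + 1 ∧ y.2.1 = 0 then
        ((1 : Matrix (Fin n) (Fin n) ℝ) ⊗ₖ C x.1) x.2.2 y.2.2 else 0) +
      (if y.1 = x.1 ∧ y.2.1 = 1 then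
        (-((D x.1)ᵀ ⊗ₖ (1 : Matrix (Fin m) (Fin m) ℝ))) x.2.2 y.2.2 else 0)

/-- the block-diagonal matrix `Ĥ = diag(Ĥ⁽¹⁾,…,Ĥ⁽ᵖ⁾)` (also `H₁`, `H₂`) with block
`Ĥ⁽ᵏ⁾ = [α_k (X_kᵀ ⊗ Iₘ), −β_k (Iₙ ⊗ Y_k), −γ_k I, 0, 0, 0;
        0, 0, 0, ζ_k (X_{k+1}ᵀ ⊗ Iₘ), −τ_k (Iₙ ⊗ Y_k), −δ_k I]`. -/
def Hmat [NeZero p] (Xh Yh : Fin p → Matrix (Fin m) (Fin n) ℝ)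
    (al be ga ze ta de : Fin p → ℝ) :
    Matrix (BIdx m n p) (Fin p × CIdx m n) ℝ :=
  Matrix.of fun x y =>
    if y.1 = x.1 then
      if x.2.1 = 0 then
        (match y.2 with
        | Sum.inl a => al x.1 * (((Xh x.1)ᵀ ⊗ₖ (1 : Matrix (Fin m) (Fin m) ℝ)) x.2.2 a)
        | Sum.inr (Sum.inl b) =>
            -(be x.1 * (((1 : Matrix (Fin n) (Fin n) ℝ) ⊗ₖ Yh x.1) x.2.2 b))
        | Sum.inr (Sum.inr (Sum.inl e)) =>
            -(ga x.1 * ((1 : Matrix (Fin n × Fin m) (Fin n × Fin m) ℝ) x.2.2 e))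
        | _ => 0)
      else
        (match y.2 with
        | Sum.inr (Sum.inr (Sum.inr (Sum.inl c))) =>
            ze x.1 * (((Xh (x.1 + 1))ᵀ ⊗ₖ (1 : Matrix (Fin m) (Fin m) ℝ)) x.2.2 c)
        | Sum.inr (Sum.inr (Sum.inr (Sum.inr (Sum.inl d)))) =>
            -(ta x.1 * (((1 : Matrix (Fin n) (Fin n) ℝ) ⊗ₖ Yh x.1) x.2.2 d))
        | Sum.inr (Sum.inr (Sum.inr (Sum.inr (Sum.inr f)))) =>
            -(de x.1 * ((1 : Matrix (Fin n × Fin m) (Fin n × Fin m) ℝ) x.2.2 f))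
        | _ => 0)
    else 0

/-- the parameter vector `t = (vec A₁; vec B₁; vec E₁; vec C₁; vec D₁; vec F₁; …)`. -/
def tvec (A C : Fin p → Matrix (Fin m) (Fin m) ℝ)
    (B D : Fin p → Matrix (Fin n) (Fin n) ℝ)
    (E F : Fin p → Matrix (Fin m) (Fin n) ℝ) : Fin p × CIdx m n → ℝ :=
  fun y =>
    match y.2 with
    | Sum.inl a => vecM (A y.1) a
    | Sum.inr (Sum.inl b) => vecM (B y.1) b
    | Sum.inr (Sum.inr (Sum.inl e)) => vecM (E y.1) e
    | Sum.inr (Sum.inr (Sum.inr (Sum.inl c))) => vecM (C y.1) c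
    | Sum.inr (Sum.inr (Sum.inr (Sum.inr (Sum.inl d)))) => vecM (D y.1) d
    | Sum.inr (Sum.inr (Sum.inr (Sum.inr (Sum.inr f)))) => vecM (F y.1) f

/-- the matrix `A_k` encoded in a parameter vector `t`. -/
def pA (t : Fin p × CIdx m n → ℝ) (k : Fin p) : Matrix (Fin m) (Fin m) ℝ :=
  Matrix.of fun i j => t (k, Sum.inl (j, i))

/-- the matrix `B_k` encoded in a parameter vector `t`. -/
def pB (t : Fin p × CIdx m n → ℝ) (k : Fin p) : Matrix (Fin n) (Fin n) ℝ :=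
  Matrix.of fun i j => t (k, Sum.inr (Sum.inl (j, i)))

/-- the matrix `E_k` encoded in a parameter vector `t`. -/
def pE (t : Fin p × CIdx m n → ℝ) (k : Fin p) : Matrix (Fin m) (Fin n) ℝ :=
  Matrix.of fun i j => t (k, Sum.inr (Sum.inr (Sum.inl (j, i))))

/-- the matrix `C_k` encoded in a parameter vector `t`. -/
def pC (t : Fin p × CIdx m n → ℝ) (k : Fin p) : Matrix (Fin m) (Fin m) ℝ :=
  Matrix.of fun i j => t (k, Sum.inr (Sum.inr (Sum.inr (Sum.inl (j, i)))))

/-- the matrix `D_k` encoded in a parameter vector `t`. -/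
def pD (t : Fin p × CIdx m n → ℝ) (k : Fin p) : Matrix (Fin n) (Fin n) ℝ :=
  Matrix.of fun i j => t (k, Sum.inr (Sum.inr (Sum.inr (Sum.inr (Sum.inl (j, i))))))

/-- the matrix `F_k` encoded in a parameter vector `t`. -/
def pF (t : Fin p × CIdx m n → ℝ) (k : Fin p) : Matrix (Fin m) (Fin n) ℝ :=
  Matrix.of fun i j => t (k, Sum.inr (Sum.inr (Sum.inr (Sum.inr (Sum.inr (j, i))))))

/-- the matrix `W(t)` built from the parameter vector `t`. -/
def Wt [NeZero p] (t : Fin p × CIdx m n → ℝ) : Matrix (BIdx m n p) (BIdx m n p) ℝ :=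
  Wmat (pA t) (pC t) (pB t) (pD t)

/-- the right-hand side `g(t) = (vec E₁; vec F₁; …; vec E_p; vec F_p)`. -/
def gt (t : Fin p × CIdx m n → ℝ) : BIdx m n p → ℝ := bigVec (pE t) (pF t)

/-- the set of parameters for which `W(t)` is invertible. -/
def Dset (m n p : ℕ) [NeZero p] : Set (Fin p × CIdx m n → ℝ) := {t | IsUnit (Wt t)}

/-- the solution map `Ψ(t) = W(t)⁻¹ g(t)`. -/
def Psi [NeZero p] (t : Fin p × CIdx m n → ℝ) : BIdx m n p → ℝ := (Wt t)⁻¹.mulVec (gt t)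

/-- the solution matrix `X_k` read off from `Ψ(t)`. -/
def Xsol [NeZero p] (t : Fin p × CIdx m n → ℝ) (k : Fin p) : Matrix (Fin m) (Fin n) ℝ :=
  Matrix.of fun i j => Psi t (k, (0 : Fin 2), (j, i))

/-- the solution matrix `Y_k` read off from `Ψ(t)`. -/
def Ysol [NeZero p] (t : Fin p × CIdx m n → ℝ) (k : Fin p) : Matrix (Fin m) (Fin n) ℝ :=
  Matrix.of fun i j => Psi t (k, (1 : Fin 2), (j, i))

/-- the matrix `H₂(t)` (all tolerances equal to one), built from the solution `Ψ(t)`. -/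
def H2t [NeZero p] (t : Fin p × CIdx m n → ℝ) : Matrix (BIdx m n p) (Fin p × CIdx m n) ℝ :=
  Hmat (Xsol t) (Ysol t) 1 1 1 1 1 1

/-- the componentwise relative ball `B⁰(a, ε)`. -/
def B0 {ι : Type*} (a : ι → ℝ) (ε : ℝ) : Set (ι → ℝ) := {x | ∀ i, |x i - a i| ≤ ε * |a i|}

/-- the componentwise distance `d(x, a)`. -/
def cdist {ι : Type*} [Fintype ι] (x a : ι → ℝ) : ℝ :=
  ⨆ i, if a i = 0 then |x i - a i| else |x i - a i| / |a i|

section Aux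
variable {m n p : ℕ}

def uuA (u : Fin p × CIdx m n → ℝ) (k : Fin p) : Matrix (Fin m) (Fin m) ℝ :=
  Matrix.of fun i j => u (k, Sum.inl (j, i))
def uuB (u : Fin p × CIdx m n → ℝ) (k : Fin p) : Matrix (Fin n) (Fin n) ℝ :=
  Matrix.of fun i j => u (k, Sum.inr (Sum.inl (j, i)))
def uuE (u : Fin p × CIdx m n → ℝ) (k : Fin p) : Matrix (Fin m) (Fin n) ℝ :=
  Matrix.of fun i j => u (k, Sum.inr (Sum.inr (Sum.inl (j, i))))
def uuC (u : Fin p × CIdx m n → ℝ) (k : Fin p) : Matrix (Fin m) (Fin m) ℝ :=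
  Matrix.of fun i j => u (k, Sum.inr (Sum.inr (Sum.inr (Sum.inl (j, i)))))
def uuD (u : Fin p × CIdx m n → ℝ) (k : Fin p) : Matrix (Fin n) (Fin n) ℝ :=
  Matrix.of fun i j => u (k, Sum.inr (Sum.inr (Sum.inr (Sum.inr (Sum.inl (j, i))))))
def uuF (u : Fin p × CIdx m n → ℝ) (k : Fin p) : Matrix (Fin m) (Fin n) ℝ :=
  Matrix.of fun i j => u (k, Sum.inr (Sum.inr (Sum.inr (Sum.inr (Sum.inr (j, i))))))

lemma hmat_mulVec [NeZero p] (Xh Yh : Fin p → Matrix (Fin m) (Fin n) ℝ)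
    (al be ga ze ta de : Fin p → ℝ) (u : Fin p × CIdx m n → ℝ)
    (k : Fin p) (c : Fin 2) (j : Fin n) (i : Fin m) :
    (Hmat Xh Yh al be ga ze ta de).mulVec u (k, c, (j, i)) =
      if c = 0 then
        (al k • (uuA u k * Xh k) - be k • (Yh k * uuB u k) - ga k • uuE u k) i j
      else
        (ze k • (uuC u k * Xh (k + 1)) - ta k • (Yh k * uuD u k) - de k • uuF u k) i j := by
  simp only [Matrix.mulVec, dotProduct, Hmat, Matrix.of_apply]
  rw [Fintype.sum_prod_type]
  rw [Finset.sum_eq_single k]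
  · by_cases hc : c = 0
    · subst hc
      simp only [if_pos rfl]
      simp only [Fintype.sum_sum_type, Matrix.kroneckerMap_apply, Matrix.one_apply,
        Matrix.transpose_apply, Matrix.sub_apply, Matrix.smul_apply, Matrix.mul_apply,
        uuA, uuB, uuE, uuC, uuD, uuF, Matrix.of_apply, smul_eq_mul,
        Fintype.sum_prod_type, mul_ite, ite_mul, mul_zero, zero_mul, mul_one, one_mul,
        neg_mul, neg_zero, Finset.sum_ite_irrel, Finset.sum_const_zero,
        Finset.sum_ite_eq, Finset.sum_ite_eq', Finset.sum_neg_distrib,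
        Finset.mem_univ, if_true, Finset.mul_sum, Prod.mk.injEq]
      have h1 : ∑ x : Fin m, al k * (u (k, Sum.inl (x, i)) * Xh k x j)
          = ∑ x : Fin m, al k * Xh k x j * u (k, Sum.inl (x, i)) :=
        Finset.sum_congr rfl fun x _ => by ring
      have h2 : ∑ x : Fin n, be k * (Yh k i x * u (k, Sum.inr (Sum.inl (j, x))))
          = ∑ x : Fin n, be k * Yh k i x * u (k, Sum.inr (Sum.inl (j, x))) :=
        Finset.sum_congr rfl fun x _ => by ring
      rw [h1, h2]; ring

    · have hc1 : c = 1 := by omega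
      subst hc1
      simp only [hc, if_false, if_true, eq_self_iff_true, Fintype.sum_sum_type, Matrix.kroneckerMap_apply, Matrix.one_apply,
        Matrix.transpose_apply, Matrix.sub_apply, Matrix.smul_apply, Matrix.mul_apply,
        uuA, uuB, uuE, uuC, uuD, uuF, Matrix.of_apply, smul_eq_mul,
        Fintype.sum_prod_type, mul_ite, ite_mul, mul_zero, zero_mul, mul_one, one_mul,
        neg_mul, neg_zero, Finset.sum_ite_irrel, Finset.sum_const_zero,
        Finset.sum_ite_eq, Finset.sum_ite_eq', Finset.sum_neg_distrib,
        Finset.mem_univ, if_true, Finset.mul_sum, Prod.mk.injEq]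
      have h1 : ∑ x : Fin m, ze k * (u (k, Sum.inr (Sum.inr (Sum.inr (Sum.inl (x, i))))) * Xh (k + 1) x j)
          = ∑ x : Fin m, ze k * Xh (k + 1) x j * u (k, Sum.inr (Sum.inr (Sum.inr (Sum.inl (x, i))))) :=
        Finset.sum_congr rfl fun x _ => by ring
      have h2 : ∑ x : Fin n, ta k * (Yh k i x * u (k, Sum.inr (Sum.inr (Sum.inr (Sum.inr (Sum.inl (j, x)))))))
          = ∑ x : Fin n, ta k * Yh k i x * u (k, Sum.inr (Sum.inr (Sum.inr (Sum.inr (Sum.inl (j, x)))))) :=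
        Finset.sum_congr rfl fun x _ => by ring
      rw [h1, h2]; ring
  · intro b _ hb
    simp [hb]
  · intro h
    exact absurd (Finset.mem_univ k) h

lemma hmat_eq_iff [NeZero p] (Xh Yh R1 R2 : Fin p → Matrix (Fin m) (Fin n) ℝ)
    (al be ga ze ta de : Fin p → ℝ) (u : Fin p × CIdx m n → ℝ) :
    (Hmat Xh Yh al be ga ze ta de).mulVec u = bigVec R1 R2 ↔
      ∀ k, (al k • (uuA u k * Xh k) - be k • (Yh k * uuB u k) - ga k • uuE u k = R1 k) ∧
        (ze k • (uuC u k * Xh (k + 1)) - ta k • (Yh k * uuD u k) - de k • uuF u k = R2 k) := by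
  constructor
  · intro h k
    constructor
    · ext i j
      have := congrFun h (k, (0 : Fin 2), (j, i))
      rw [hmat_mulVec, if_pos rfl] at this
      simpa [bigVec, vecM] using this
    · ext i j
      have := congrFun h (k, (1 : Fin 2), (j, i))
      rw [hmat_mulVec, if_neg (by decide)] at this
      simpa [bigVec, vecM] using this
  · intro h
    funext x
    obtain ⟨k, c, j, i⟩ := x
    rw [hmat_mulVec]
    by_cases hc : c = 0
    · subst hc
      rw [if_pos rfl, (h k).1]
      simp [bigVec, vecM]
    · have hc1 : c = 1 := by omega
      subst hc1
      rw [if_neg (by decide), (h k).2]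
      simp [bigVec, vecM]

def mkU (al be ga ze ta de : Fin p → ℝ)
    (dA dC : Fin p → Matrix (Fin m) (Fin m) ℝ) (dB dD : Fin p → Matrix (Fin n) (Fin n) ℝ)
    (dE dF : Fin p → Matrix (Fin m) (Fin n) ℝ) : Fin p × CIdx m n → ℝ :=
  fun y => match y.2 with
  | Sum.inl a => dA y.1 a.2 a.1 / al y.1
  | Sum.inr (Sum.inl b) => dB y.1 b.2 b.1 / be y.1
  | Sum.inr (Sum.inr (Sum.inl e)) => dE y.1 e.2 e.1 / ga y.1
  | Sum.inr (Sum.inr (Sum.inr (Sum.inl c))) => dC y.1 c.2 c.1 / ze y.1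
  | Sum.inr (Sum.inr (Sum.inr (Sum.inr (Sum.inl d)))) => dD y.1 d.2 d.1 / ta y.1
  | Sum.inr (Sum.inr (Sum.inr (Sum.inr (Sum.inr f)))) => dF y.1 f.2 f.1 / de y.1

lemma swap_sq {a b : ℕ} (f : Fin a × Fin b → ℝ) :
    ∑ x : Fin a × Fin b, f x = ∑ i : Fin b, ∑ j : Fin a, f (j, i) := by
  rw [Fintype.sum_prod_type, Finset.sum_comm]

def sixsum (u : Fin p × CIdx m n → ℝ) (k : Fin p) : ℝ :=
  (∑ i, ∑ j, uuA u k i j ^ 2) + (∑ i, ∑ j, uuB u k i j ^ 2)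
    + (∑ i, ∑ j, uuE u k i j ^ 2) + (∑ i, ∑ j, uuC u k i j ^ 2)
    + (∑ i, ∑ j, uuD u k i j ^ 2) + (∑ i, ∑ j, uuF u k i j ^ 2)

lemma sqsum_split (u : Fin p × CIdx m n → ℝ) :
    ∑ y, u y ^ 2 = ∑ k, sixsum u k := by
  rw [Fintype.sum_prod_type]
  refine Finset.sum_congr rfl fun k _ => ?_
  rw [Fintype.sum_sum_type, Fintype.sum_sum_type, Fintype.sum_sum_type,
    Fintype.sum_sum_type, Fintype.sum_sum_type,
    swap_sq, swap_sq, swap_sq, swap_sq, swap_sq, swap_sq]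
  simp only [sixsum, uuA, uuB, uuE, uuC, uuD, uuF, Matrix.of_apply]
  ring

lemma sixsum_nonneg (u : Fin p × CIdx m n → ℝ) (k : Fin p) : 0 ≤ sixsum u k := by
  unfold sixsum; positivity

lemma sixsum_le_total (u : Fin p × CIdx m n → ℝ) (k : Fin p) :
    sixsum u k ≤ ∑ y, u y ^ 2 := by
  rw [sqsum_split]
  exact Finset.single_le_sum (fun t _ => sixsum_nonneg u t) (Finset.mem_univ k)

lemma frob_nonneg' {ι κ : Type*} [Fintype ι] [Fintype κ] (M : Matrix ι κ ℝ) : 0 ≤ frob M :=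
  Real.sqrt_nonneg _

lemma frob_blocks_le (u : Fin p × CIdx m n → ℝ) (k : Fin p) :
    frob (uuA u k) ≤ l2norm u ∧ frob (uuB u k) ≤ l2norm u ∧ frob (uuE u k) ≤ l2norm u ∧
    frob (uuC u k) ≤ l2norm u ∧ frob (uuD u k) ≤ l2norm u ∧ frob (uuF u k) ≤ l2norm u := by
  have hT := sixsum_le_total u k
  have hA : 0 ≤ ∑ i, ∑ j, uuA u k i j ^ 2 := by positivity
  have hB : 0 ≤ ∑ i, ∑ j, uuB u k i j ^ 2 := by positivity
  have hE : 0 ≤ ∑ i, ∑ j, uuE u k i j ^ 2 := by positivity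
  have hC : 0 ≤ ∑ i, ∑ j, uuC u k i j ^ 2 := by positivity
  have hD : 0 ≤ ∑ i, ∑ j, uuD u k i j ^ 2 := by positivity
  have hF : 0 ≤ ∑ i, ∑ j, uuF u k i j ^ 2 := by positivity
  unfold sixsum at hT
  exact ⟨Real.sqrt_le_sqrt (by linarith), Real.sqrt_le_sqrt (by linarith),
    Real.sqrt_le_sqrt (by linarith), Real.sqrt_le_sqrt (by linarith),
    Real.sqrt_le_sqrt (by linarith), Real.sqrt_le_sqrt (by linarith)⟩

lemma frob_smul' {ι κ : Type*} [Fintype ι] [Fintype κ] (a : ℝ) (M : Matrix ι κ ℝ) :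
    frob (a • M) = |a| * frob M := by
  unfold frob
  rw [← Real.sqrt_sq_eq_abs, ← Real.sqrt_mul (sq_nonneg a)]
  congr 1
  rw [Finset.mul_sum]
  refine Finset.sum_congr rfl fun i _ => ?_
  rw [Finset.mul_sum]
  refine Finset.sum_congr rfl fun j _ => ?_
  simp [Matrix.smul_apply, smul_eq_mul]
  ring

lemma block_div_sq {a b : ℕ} (M : Matrix (Fin a) (Fin b) ℝ) (c ε : ℝ) (hc : 0 < c)
    (hM : frob M ≤ ε * c) : ∑ i, ∑ j, (M i j / c) ^ 2 ≤ ε ^ 2 := by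
  have h1 : ∑ i, ∑ j, (M i j / c) ^ 2 = (∑ i, ∑ j, M i j ^ 2) / c ^ 2 := by
    rw [Finset.sum_div]
    refine Finset.sum_congr rfl fun i _ => ?_
    rw [Finset.sum_div]
    exact Finset.sum_congr rfl fun j _ => div_pow _ _ _
  rw [h1, div_le_iff₀ (by positivity)]
  have h2 : ∑ i, ∑ j, M i j ^ 2 = frob M ^ 2 := (Real.sq_sqrt (by positivity)).symm
  rw [h2]
  nlinarith [frob_nonneg' M]

end Aux
/-- the solution set of `Ĥ u = r` is nonempty and the normwise backward
error `η` satisfies `μ/√(6p) ≤ η ≤ μ`, where `μ = inf {‖u‖₂ : Ĥ u = r}`. -/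
theorem backward_error_bounds (m n p : ℕ) [NeZero m] [NeZero n] [NeZero p]
    (A C : Fin p → Matrix (Fin m) (Fin m) ℝ) (B D : Fin p → Matrix (Fin n) (Fin n) ℝ)
    (E F Xh Yh : Fin p → Matrix (Fin m) (Fin n) ℝ)
    (al be ga ze ta de : Fin p → ℝ)
    (hal : ∀ k, 0 < al k) (hbe : ∀ k, 0 < be k) (hga : ∀ k, 0 < ga k)
    (hze : ∀ k, 0 < ze k) (hta : ∀ k, 0 < ta k) (hde : ∀ k, 0 < de k) :
    let r : BIdx m n p → ℝ :=
      bigVec (fun k => E k - (A k * Xh k - Yh k * B k))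
        (fun k => F k - (C k * Xh (k + 1) - Yh k * D k))
    let S : Set (Fin p × CIdx m n → ℝ) :=
      {u | (Hmat Xh Yh al be ga ze ta de).mulVec u = r}
    let μ : ℝ := sInf (l2norm '' S)
    let η : ℝ := sInf {ε : ℝ | 0 ≤ ε ∧
      ∃ (dA dC : Fin p → Matrix (Fin m) (Fin m) ℝ)
        (dB dD : Fin p → Matrix (Fin n) (Fin n) ℝ)
        (dE dF : Fin p → Matrix (Fin m) (Fin n) ℝ),
        (∀ k, frob (dA k) ≤ ε * al k ∧ frob (dB k) ≤ ε * be k ∧ frob (dE k) ≤ ε * ga k ∧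
          frob (dC k) ≤ ε * ze k ∧ frob (dD k) ≤ ε * ta k ∧ frob (dF k) ≤ ε * de k) ∧
        (∀ k, (A k + dA k) * Xh k - Yh k * (B k + dB k) = E k + dE k ∧
          (C k + dC k) * Xh (k + 1) - Yh k * (D k + dD k) = F k + dF k)}
    S.Nonempty ∧ μ / Real.sqrt (6 * (p : ℝ)) ≤ η ∧ η ≤ μ := by
  intro r S μ η
  have hpn : (0:ℝ) < p := by
    have := Nat.pos_of_ne_zero (NeZero.ne p); exact_mod_cast this
  have hsq : (0:ℝ) < Real.sqrt (6 * p) := Real.sqrt_pos.2 (by positivity)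
  have hSlb : ∀ x ∈ l2norm '' S, (0:ℝ) ≤ x := by
    rintro x ⟨u, _, rfl⟩; exact Real.sqrt_nonneg _
  have hSbdd : BddBelow (l2norm '' S) := ⟨0, hSlb⟩
  have hmem : ∀ u : Fin p × CIdx m n → ℝ, u ∈ S ↔
      ∀ k, (al k • (uuA u k * Xh k) - be k • (Yh k * uuB u k) - ga k • uuE u k
              = E k - (A k * Xh k - Yh k * B k)) ∧
        (ze k • (uuC u k * Xh (k + 1)) - ta k • (Yh k * uuD u k) - de k • uuF u k
              = F k - (C k * Xh (k + 1) - Yh k * D k)) :=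
    fun u => hmat_eq_iff Xh Yh _ _ al be ga ze ta de u
  set T : Set ℝ := {ε : ℝ | 0 ≤ ε ∧
      ∃ (dA dC : Fin p → Matrix (Fin m) (Fin m) ℝ)
        (dB dD : Fin p → Matrix (Fin n) (Fin n) ℝ)
        (dE dF : Fin p → Matrix (Fin m) (Fin n) ℝ),
        (∀ k, frob (dA k) ≤ ε * al k ∧ frob (dB k) ≤ ε * be k ∧ frob (dE k) ≤ ε * ga k ∧
          frob (dC k) ≤ ε * ze k ∧ frob (dD k) ≤ ε * ta k ∧ frob (dF k) ≤ ε * de k) ∧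
        (∀ k, (A k + dA k) * Xh k - Yh k * (B k + dB k) = E k + dE k ∧
          (C k + dC k) * Xh (k + 1) - Yh k * (D k + dD k) = F k + dF k)} with hTdef
  have hηT : η = sInf T := rfl
  -- the explicit element of S
  set u0 : Fin p × CIdx m n → ℝ := mkU al be ga ze ta de (fun _ => 0) (fun _ => 0)
    (fun _ => 0) (fun _ => 0) (fun k => -(E k - (A k * Xh k - Yh k * B k)))
    (fun k => -(F k - (C k * Xh (k + 1) - Yh k * D k))) with hu0def
  have hu0 : u0 ∈ S := by
    rw [hmem]
    intro k
    constructor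
    · ext i j
      simp [uuA, uuB, uuE, u0, mkU, Matrix.mul_apply, Matrix.smul_apply, Matrix.sub_apply,
        Matrix.neg_apply, Matrix.zero_apply, zero_div]
      field_simp [(hga k).ne']
      ring
    · ext i j
      simp [uuC, uuD, uuF, u0, mkU, Matrix.mul_apply, Matrix.smul_apply, Matrix.sub_apply,
        Matrix.neg_apply, Matrix.zero_apply, zero_div]
      field_simp [(hde k).ne']
      ring
  have hSne : S.Nonempty := ⟨u0, hu0⟩
  -- direction 1 : every u in S produces admissible perturbations with ε = ‖u‖₂
  have hL1 : ∀ u ∈ S, l2norm u ∈ T := by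
    intro u hu
    refine ⟨Real.sqrt_nonneg _, fun k => al k • uuA u k, fun k => ze k • uuC u k,
      fun k => be k • uuB u k, fun k => ta k • uuD u k,
      fun k => ga k • uuE u k, fun k => de k • uuF u k, ?_, ?_⟩
    · intro k
      obtain ⟨h1, h2, h3, h4, h5, h6⟩ := frob_blocks_le u k
      refine ⟨?_, ?_, ?_, ?_, ?_, ?_⟩
      · rw [frob_smul', abs_of_pos (hal k), mul_comm (l2norm u) (al k)]
        exact mul_le_mul_of_nonneg_left h1 (hal k).le
      · rw [frob_smul', abs_of_pos (hbe k), mul_comm (l2norm u) (be k)]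
        exact mul_le_mul_of_nonneg_left h2 (hbe k).le
      · rw [frob_smul', abs_of_pos (hga k), mul_comm (l2norm u) (ga k)]
        exact mul_le_mul_of_nonneg_left h3 (hga k).le
      · rw [frob_smul', abs_of_pos (hze k), mul_comm (l2norm u) (ze k)]
        exact mul_le_mul_of_nonneg_left h4 (hze k).le
      · rw [frob_smul', abs_of_pos (hta k), mul_comm (l2norm u) (ta k)]
        exact mul_le_mul_of_nonneg_left h5 (hta k).le
      · rw [frob_smul', abs_of_pos (hde k), mul_comm (l2norm u) (de k)]
        exact mul_le_mul_of_nonneg_left h6 (hde k).le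
    · intro k
      have hk1 := ((hmem u).1 hu k).1
      have hk2 := ((hmem u).1 hu k).2
      constructor
      · have key : (A k + al k • uuA u k) * Xh k - Yh k * (B k + be k • uuB u k)
            - (E k + ga k • uuE u k)
            = (al k • (uuA u k * Xh k) - be k • (Yh k * uuB u k) - ga k • uuE u k)
              - (E k - (A k * Xh k - Yh k * B k)) := by
          rw [Matrix.add_mul, Matrix.mul_add, Matrix.smul_mul, Matrix.mul_smul]; abel
        rw [hk1, sub_self] at key
        exact sub_eq_zero.mp key
      · have key : (C k + ze k • uuC u k) * Xh (k + 1) - Yh k * (D k + ta k • uuD u k)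
            - (F k + de k • uuF u k)
            = (ze k • (uuC u k * Xh (k + 1)) - ta k • (Yh k * uuD u k) - de k • uuF u k)
              - (F k - (C k * Xh (k + 1) - Yh k * D k)) := by
          rw [Matrix.add_mul, Matrix.mul_add, Matrix.smul_mul, Matrix.mul_smul]; abel
        rw [hk2, sub_self] at key
        exact sub_eq_zero.mp key
  have hTne : T.Nonempty := ⟨l2norm u0, hL1 u0 hu0⟩
  have hTbdd : BddBelow T := ⟨0, fun ε hε => hε.1⟩
  refine ⟨hSne, ?_, ?_⟩
  · -- μ / √(6p) ≤ η
    rw [hηT]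
    refine le_csInf hTne ?_
    rintro ε ⟨hε0, dA, dC, dB, dD, dE, dF, hbnd, heq⟩
    rw [div_le_iff₀ hsq]
    set u : Fin p × CIdx m n → ℝ := mkU al be ga ze ta de dA dC dB dD dE dF with hudef
    have hAk : ∀ k, al k • uuA u k = dA k := by
      intro k; ext i j
      simp only [uuA, u, mkU, Matrix.smul_apply, Matrix.of_apply, smul_eq_mul]
      rw [mul_comm]; exact div_mul_cancel₀ _ (hal k).ne'
    have hBk : ∀ k, be k • uuB u k = dB k := by
      intro k; ext i j
      simp only [uuB, u, mkU, Matrix.smul_apply, Matrix.of_apply, smul_eq_mul]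
      rw [mul_comm]; exact div_mul_cancel₀ _ (hbe k).ne'
    have hEk : ∀ k, ga k • uuE u k = dE k := by
      intro k; ext i j
      simp only [uuE, u, mkU, Matrix.smul_apply, Matrix.of_apply, smul_eq_mul]
      rw [mul_comm]; exact div_mul_cancel₀ _ (hga k).ne'
    have hCk : ∀ k, ze k • uuC u k = dC k := by
      intro k; ext i j
      simp only [uuC, u, mkU, Matrix.smul_apply, Matrix.of_apply, smul_eq_mul]
      rw [mul_comm]; exact div_mul_cancel₀ _ (hze k).ne'
    have hDk : ∀ k, ta k • uuD u k = dD k := by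
      intro k; ext i j
      simp only [uuD, u, mkU, Matrix.smul_apply, Matrix.of_apply, smul_eq_mul]
      rw [mul_comm]; exact div_mul_cancel₀ _ (hta k).ne'
    have hFk : ∀ k, de k • uuF u k = dF k := by
      intro k; ext i j
      simp only [uuF, u, mkU, Matrix.smul_apply, Matrix.of_apply, smul_eq_mul]
      rw [mul_comm]; exact div_mul_cancel₀ _ (hde k).ne'
    have huS : u ∈ S := by
      rw [hmem]
      intro k
      constructor
      · rw [← Matrix.smul_mul, ← Matrix.mul_smul, hAk k, hBk k, hEk k]
        have key : dA k * Xh k - Yh k * dB k - dE k - (E k - (A k * Xh k - Yh k * B k))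
            = ((A k + dA k) * Xh k - Yh k * (B k + dB k)) - (E k + dE k) := by
          rw [Matrix.add_mul, Matrix.mul_add]; abel
        rw [(heq k).1, sub_self] at key
        exact sub_eq_zero.mp key
      · rw [← Matrix.smul_mul, ← Matrix.mul_smul, hCk k, hDk k, hFk k]
        have key : dC k * Xh (k + 1) - Yh k * dD k - dF k
              - (F k - (C k * Xh (k + 1) - Yh k * D k))
            = ((C k + dC k) * Xh (k + 1) - Yh k * (D k + dD k)) - (F k + dF k) := by
          rw [Matrix.add_mul, Matrix.mul_add]; abel
        rw [(heq k).2, sub_self] at key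
        exact sub_eq_zero.mp key
    have hμle : μ ≤ l2norm u := csInf_le hSbdd ⟨u, huS, rfl⟩
    have hsix : ∀ k, sixsum u k ≤ 6 * ε ^ 2 := by
      intro k
      obtain ⟨b1, b2, b3, b4, b5, b6⟩ := hbnd k
      have e1 : ∑ i, ∑ j, uuA u k i j ^ 2 ≤ ε ^ 2 := by
        have := block_div_sq (dA k) (al k) ε (hal k) b1
        simpa [uuA, u, mkU] using this
      have e2 : ∑ i, ∑ j, uuB u k i j ^ 2 ≤ ε ^ 2 := by
        have := block_div_sq (dB k) (be k) ε (hbe k) b2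
        simpa [uuB, u, mkU] using this
      have e3 : ∑ i, ∑ j, uuE u k i j ^ 2 ≤ ε ^ 2 := by
        have := block_div_sq (dE k) (ga k) ε (hga k) b3
        simpa [uuE, u, mkU] using this
      have e4 : ∑ i, ∑ j, uuC u k i j ^ 2 ≤ ε ^ 2 := by
        have := block_div_sq (dC k) (ze k) ε (hze k) b4
        simpa [uuC, u, mkU] using this
      have e5 : ∑ i, ∑ j, uuD u k i j ^ 2 ≤ ε ^ 2 := by
        have := block_div_sq (dD k) (ta k) ε (hta k) b5
        simpa [uuD, u, mkU] using this
      have e6 : ∑ i, ∑ j, uuF u k i j ^ 2 ≤ ε ^ 2 := by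
        have := block_div_sq (dF k) (de k) ε (hde k) b6
        simpa [uuF, u, mkU] using this
      unfold sixsum
      linarith
    have htot : ∑ y, u y ^ 2 ≤ 6 * (p:ℝ) * ε ^ 2 := by
      rw [sqsum_split]
      calc ∑ k, sixsum u k ≤ ∑ _k : Fin p, 6 * ε ^ 2 :=
            Finset.sum_le_sum fun k _ => hsix k
        _ = (p:ℝ) * (6 * ε ^ 2) := by
            rw [Finset.sum_const, Finset.card_univ, Fintype.card_fin, nsmul_eq_mul]
        _ = 6 * (p:ℝ) * ε ^ 2 := by ring
    have hb : l2norm u ≤ ε * Real.sqrt (6 * p) := by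
      have h := Real.sqrt_le_sqrt htot
      rwa [show (6 * (p:ℝ) * ε ^ 2) = (6 * (p:ℝ)) * ε ^ 2 from by ring,
        Real.sqrt_mul (by positivity), Real.sqrt_sq hε0, mul_comm] at h
    linarith
  · -- η ≤ μ
    rw [hηT]
    refine le_csInf (hSne.image l2norm) ?_
    rintro x ⟨u, hu, rfl⟩
    exact csInf_le hTbdd (hL1 u hu)
end
end

section
/- Assume ‖W⁻¹ΔW‖₂ < 1, the tolerances α_k, β_k, γ_k, ζ_k, τ_k, δ_k are positive, and set ε = max over k = 1,…,p of max{‖ΔA_k‖_F/α_k, ‖ΔB_k‖_F/β_k, ‖ΔE_k‖_F/γ_k, ‖ΔC_k‖_F/ζ_k, ‖ΔD_k‖_F/τ_k, ‖ΔF_k‖_F/δ_k}. If (ΔX_k, ΔY_k) solves the perturbed PGCS equation, then ‖Δz‖₂ ≤ √(6p) ‖W⁻¹H₁‖₂ ε / (1 − ‖W⁻¹ΔW‖₂). -/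
open Matrix
open scoped Kronecker

noncomputable section

variable {m n p : ℕ}

namespace Aux

section Norms
variable {ι κ : Type*} [Fintype ι] [Fintype κ]

def toE (v : ι → ℝ) : EuclideanSpace ℝ ι := (WithLp.equiv 2 _).symm v

lemma l2norm_eq_norm (v : ι → ℝ) : l2norm v = ‖toE v‖ := by
  simp [l2norm, EuclideanSpace.norm_eq, toE, Real.norm_eq_abs, sq_abs]

def mulVecCLM (M : Matrix ι κ ℝ) : EuclideanSpace ℝ κ →L[ℝ] EuclideanSpace ℝ ι :=
  LinearMap.toContinuousLinearMap
    { toFun := fun v => toE (M.mulVec ((WithLp.equiv 2 _) v))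
      map_add' := by
        intro x y
        simp [toE, Matrix.mulVec_add]
      map_smul' := by
        intro c x
        simp [toE, Matrix.mulVec_smul] }

lemma mulVecCLM_apply (M : Matrix ι κ ℝ) (v : EuclideanSpace ℝ κ) :
    mulVecCLM M v = toE (M.mulVec ((WithLp.equiv 2 _) v)) := rfl

lemma specNorm_eq (M : Matrix ι κ ℝ) : specNorm M = ‖mulVecCLM M‖ := by
  rw [← (mulVecCLM M).sSup_unitClosedBall_eq_norm]
  unfold specNorm
  congr 1
  ext r
  constructor
  · rintro ⟨v, hv, rfl⟩
    refine ⟨toE v, ?_, ?_⟩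
    · simpa [Metric.mem_closedBall, ← l2norm_eq_norm] using hv
    · show ‖mulVecCLM M (toE v)‖ = l2norm (M.mulVec v)
      rw [mulVecCLM_apply, ← l2norm_eq_norm]
      simp [toE]
  · rintro ⟨x, hx, rfl⟩
    refine ⟨(WithLp.equiv 2 _) x, ?_, ?_⟩
    · have : toE ((WithLp.equiv 2 _) x) = x := by simp [toE]
      simp only [Set.mem_setOf_eq, l2norm_eq_norm, this]
      simpa [Metric.mem_closedBall] using hx
    · show l2norm (M.mulVec ((WithLp.equiv 2 _) x)) = ‖mulVecCLM M x‖
      rw [mulVecCLM_apply, ← l2norm_eq_norm]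

lemma specNorm_nonneg (M : Matrix ι κ ℝ) : 0 ≤ specNorm M := by
  rw [specNorm_eq]; exact norm_nonneg _

lemma l2norm_mulVec_le (M : Matrix ι κ ℝ) (v : κ → ℝ) :
    l2norm (M.mulVec v) ≤ specNorm M * l2norm v := by
  rw [specNorm_eq, l2norm_eq_norm, l2norm_eq_norm v]
  have h := (mulVecCLM M).le_opNorm (toE v)
  rw [mulVecCLM_apply] at h
  simpa [toE] using h

lemma l2norm_neg (v : ι → ℝ) : l2norm (-v) = l2norm v := by
  simp [l2norm]

lemma l2norm_add_le (v w : ι → ℝ) : l2norm (v + w) ≤ l2norm v + l2norm w := by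
  rw [l2norm_eq_norm, l2norm_eq_norm, l2norm_eq_norm]
  have : toE (v + w) = toE v + toE w := rfl
  rw [this]; exact norm_add_le _ _

lemma l2norm_nonneg (v : ι → ℝ) : 0 ≤ l2norm v := Real.sqrt_nonneg _


end Norms

variable {m n p : ℕ}

lemma kron1A_sum (A : Matrix (Fin m) (Fin m) ℝ) (X : Matrix (Fin m) (Fin n) ℝ)
    (j : Fin n) (i : Fin m) :
    ∑ j' : Fin n, ∑ i' : Fin m,
      ((1 : Matrix (Fin n) (Fin n) ℝ) ⊗ₖ A) (j, i) (j', i') * X i' j' = (A * X) i j := by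
  simp [Matrix.kroneckerMap_apply, Matrix.one_apply, Matrix.mul_apply, ite_mul,
    Finset.sum_ite_eq]

lemma kronB1_sum (B : Matrix (Fin n) (Fin n) ℝ) (Y : Matrix (Fin m) (Fin n) ℝ)
    (j : Fin n) (i : Fin m) :
    ∑ j' : Fin n, ∑ i' : Fin m,
      ((B)ᵀ ⊗ₖ (1 : Matrix (Fin m) (Fin m) ℝ)) (j, i) (j', i') * Y i' j' = (Y * B) i j := by
  simp [Matrix.kroneckerMap_apply, Matrix.one_apply, Matrix.mul_apply, Matrix.transpose_apply,
    mul_ite, Finset.mul_sum, mul_comm]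

lemma kronX1_sum (X : Matrix (Fin m) (Fin n) ℝ) (dA : Matrix (Fin m) (Fin m) ℝ)
    (j : Fin n) (i : Fin m) :
    ∑ j' : Fin m, ∑ i' : Fin m,
      ((X)ᵀ ⊗ₖ (1 : Matrix (Fin m) (Fin m) ℝ)) (j, i) (j', i') * dA i' j' = (dA * X) i j := by
  simp [Matrix.kroneckerMap_apply, Matrix.one_apply, Matrix.mul_apply, Matrix.transpose_apply,
    mul_ite, Finset.mul_sum, mul_comm]

lemma kron1Y_sum (Y : Matrix (Fin m) (Fin n) ℝ) (dB : Matrix (Fin n) (Fin n) ℝ)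
    (j : Fin n) (i : Fin m) :
    ∑ j' : Fin n, ∑ i' : Fin n,
      ((1 : Matrix (Fin n) (Fin n) ℝ) ⊗ₖ Y) (j, i) (j', i') * dB i' j' = (Y * dB) i j := by
  simp [Matrix.kroneckerMap_apply, Matrix.one_apply, Matrix.mul_apply, ite_mul,
    Finset.sum_ite_eq]

lemma idsum (dEk : Matrix (Fin m) (Fin n) ℝ) (j : Fin n) (i : Fin m) :
    ∑ j' : Fin n, ∑ i' : Fin m,
      (1 : Matrix (Fin n × Fin m) (Fin n × Fin m) ℝ) (j, i) (j', i') * dEk i' j' = dEk i j := by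
  simp [Matrix.one_apply, Prod.ext_iff, ite_and, ite_mul, Finset.sum_ite_eq]

lemma Wmat_mulVec [NeZero p] (A C : Fin p → Matrix (Fin m) (Fin m) ℝ)
    (B D : Fin p → Matrix (Fin n) (Fin n) ℝ) (X Y : Fin p → Matrix (Fin m) (Fin n) ℝ) :
    (Wmat A C B D).mulVec (bigVec X Y) =
      bigVec (fun k => A k * X k - Y k * B k) (fun k => C k * X (k + 1) - Y k * D k) := by
  funext x
  obtain ⟨k, s, j, i⟩ := x
  fin_cases s
  · show ∑ y, Wmat A C B D (k, 0, j, i) y * bigVec X Y y = (A k * X k - Y k * B k) i j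
    simp only [Wmat, bigVec, Matrix.of_apply, vecM]
    rw [Fintype.sum_prod_type]
    simp only [Fintype.sum_prod_type, Fin.sum_univ_two, ite_and]
    simp only [Finset.sum_add_distrib, ite_mul, zero_mul, add_mul]
    simp [Finset.sum_ite_eq, Finset.sum_sub_distrib, sub_eq_add_neg,
      Matrix.sub_apply, Matrix.one_apply, Matrix.mul_apply, ite_mul, mul_ite,
      mul_comm, mul_left_comm]
  · show ∑ y, Wmat A C B D (k, 1, j, i) y * bigVec X Y y = (C k * X (k+1) - Y k * D k) i j
    simp only [Wmat, bigVec, Matrix.of_apply, vecM]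
    rw [Fintype.sum_prod_type]
    simp only [Fintype.sum_prod_type, Fin.sum_univ_two, ite_and]
    simp only [Finset.sum_add_distrib, ite_mul, zero_mul, add_mul]
    simp [Finset.sum_ite_eq, Finset.sum_sub_distrib, sub_eq_add_neg,
      Matrix.sub_apply, Matrix.one_apply, Matrix.mul_apply, ite_mul, mul_ite,
      mul_comm, mul_left_comm]


lemma bigVec_add [NeZero p] (X X' Y Y' : Fin p → Matrix (Fin m) (Fin n) ℝ) :
    bigVec (fun k => X k + X' k) (fun k => Y k + Y' k) = bigVec X Y + bigVec X' Y' := by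
  funext x; by_cases h : x.2.1 = 0 <;> simp [bigVec, vecM, h]

lemma bigVec_sub [NeZero p] (X X' Y Y' : Fin p → Matrix (Fin m) (Fin n) ℝ) :
    bigVec (fun k => X k - X' k) (fun k => Y k - Y' k) = bigVec X Y - bigVec X' Y' := by
  funext x; by_cases h : x.2.1 = 0 <;> simp [bigVec, vecM, h]

lemma Wmat_add [NeZero p] (A C dA dC : Fin p → Matrix (Fin m) (Fin m) ℝ)
    (B D dB dD : Fin p → Matrix (Fin n) (Fin n) ℝ) :
    Wmat (fun k => A k + dA k) (fun k => C k + dC k) (fun k => B k + dB k)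
        (fun k => D k + dD k) = Wmat A C B D + Wmat dA dC dB dD := by
  funext x y
  simp only [Wmat, Matrix.of_apply, Matrix.add_apply, Matrix.kroneckerMap_apply,
    Matrix.transpose_apply, Matrix.neg_apply, Matrix.one_apply]
  split_ifs <;> ring

lemma Hmat_mulVec [NeZero p] (X Y : Fin p → Matrix (Fin m) (Fin n) ℝ)
    (al be ga ze ta de : Fin p → ℝ)
    (hal : ∀ k, al k ≠ 0) (hbe : ∀ k, be k ≠ 0) (hga : ∀ k, ga k ≠ 0)
    (hze : ∀ k, ze k ≠ 0) (hta : ∀ k, ta k ≠ 0) (hde : ∀ k, de k ≠ 0)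
    (dA dC : Fin p → Matrix (Fin m) (Fin m) ℝ) (dB dD : Fin p → Matrix (Fin n) (Fin n) ℝ)
    (dE dF : Fin p → Matrix (Fin m) (Fin n) ℝ) :
    (Hmat X Y al be ga ze ta de).mulVec
        (fun y => match y.2 with
          | Sum.inl a => vecM (dA y.1) a / al y.1
          | Sum.inr (Sum.inl b) => vecM (dB y.1) b / be y.1
          | Sum.inr (Sum.inr (Sum.inl e)) => vecM (dE y.1) e / ga y.1
          | Sum.inr (Sum.inr (Sum.inr (Sum.inl c))) => vecM (dC y.1) c / ze y.1
          | Sum.inr (Sum.inr (Sum.inr (Sum.inr (Sum.inl d)))) => vecM (dD y.1) d / ta y.1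
          | Sum.inr (Sum.inr (Sum.inr (Sum.inr (Sum.inr f)))) => vecM (dF y.1) f / de y.1) =
      bigVec (fun k => dA k * X k - Y k * dB k - dE k)
        (fun k => dC k * X (k + 1) - Y k * dD k - dF k) := by
  have hc : ∀ (c : ℝ), c ≠ 0 → ∀ w v : ℝ, c * w * (v / c) = w * v := by
    intro c hc w v; field_simp
  have hc2 : ∀ (c : ℝ), c ≠ 0 → ∀ v : ℝ, c * (v / c) = v := by
    intro c hc v; field_simp
  have hc3 : ∀ (c : ℝ), c ≠ 0 → ∀ v w : ℝ, c * (v / c * w) = v * w := by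
    intro c hc v w; field_simp
  funext x
  obtain ⟨k, s, j, i⟩ := x
  fin_cases s
  · show ∑ y, Hmat X Y al be ga ze ta de (k, 0, j, i) y * _ = _
    simp only [Hmat, bigVec, Matrix.of_apply, vecM]
    rw [Fintype.sum_prod_type]
    simp only [Fintype.sum_sum_type, ite_mul, zero_mul, Finset.sum_ite_irrel,
      Finset.sum_add_distrib, Finset.sum_ite_eq, Finset.mem_univ, if_true]
    simp only [neg_mul, hc (al k) (hal k), hc (be k) (hbe k), hc (ga k) (hga k),
      hc (ze k) (hze k), hc (ta k) (hta k), hc (de k) (hde k)]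
    simp [Fintype.sum_prod_type, Matrix.one_apply, Matrix.mul_apply, ite_mul, mul_ite,
      mul_comm, mul_left_comm, Finset.sum_ite_eq, Matrix.sub_apply,
      Finset.sum_sub_distrib, Prod.ext_iff, ite_and, sub_eq_add_neg]
    simp only [hc2 (al k) (hal k), hc2 (be k) (hbe k), hc2 (ga k) (hga k),
      hc2 (ze k) (hze k), hc2 (ta k) (hta k), hc2 (de k) (hde k),
      hc3 (al k) (hal k), hc3 (be k) (hbe k), hc3 (ga k) (hga k),
      hc3 (ze k) (hze k), hc3 (ta k) (hta k), hc3 (de k) (hde k)]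
    ring
  · show ∑ y, Hmat X Y al be ga ze ta de (k, 1, j, i) y * _ = _
    simp only [Hmat, bigVec, Matrix.of_apply, vecM]
    rw [Fintype.sum_prod_type]
    simp only [Fintype.sum_sum_type, ite_mul, zero_mul, Finset.sum_ite_irrel,
      Finset.sum_add_distrib, Finset.sum_ite_eq, Finset.mem_univ, if_true]
    simp only [neg_mul, hc (al k) (hal k), hc (be k) (hbe k), hc (ga k) (hga k),
      hc (ze k) (hze k), hc (ta k) (hta k), hc (de k) (hde k)]
    simp [Fintype.sum_prod_type, Matrix.one_apply, Matrix.mul_apply, ite_mul, mul_ite,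
      mul_comm, mul_left_comm, Finset.sum_ite_eq, Matrix.sub_apply,
      Finset.sum_sub_distrib, Prod.ext_iff, ite_and, sub_eq_add_neg]
    simp only [hc2 (al k) (hal k), hc2 (be k) (hbe k), hc2 (ga k) (hga k),
      hc2 (ze k) (hze k), hc2 (ta k) (hta k), hc2 (de k) (hde k),
      hc3 (al k) (hal k), hc3 (be k) (hbe k), hc3 (ga k) (hga k),
      hc3 (ze k) (hze k), hc3 (ta k) (hta k), hc3 (de k) (hde k)]
    ring

lemma frob_block {a b : ℕ} (M : Matrix (Fin a) (Fin b) ℝ) (c : ℝ) (hc : 0 < c) :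
    ∑ x : Fin b × Fin a, (vecM M x / c) ^ 2 = (frob M / c) ^ 2 := by
  simp only [div_pow, Fintype.sum_prod_type, vecM, ← Finset.sum_div]
  congr 1
  rw [frob, Real.sq_sqrt (by positivity)]
  exact Finset.sum_comm

lemma frob_nonneg {a b : ℕ} (M : Matrix (Fin a) (Fin b) ℝ) : 0 ≤ frob M :=
  Real.sqrt_nonneg _

end Aux


open Aux in
set_option maxHeartbeats 1000000 in
/-- first-order normwise perturbation bound
`‖Δz‖₂ ≤ √(6p) ‖W⁻¹H₁‖₂ ε / (1 − ‖W⁻¹ΔW‖₂)`. -/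
theorem perturbation_bound_H1 (m n p : ℕ) [NeZero m] [NeZero n] [NeZero p]
    (A C dA dC : Fin p → Matrix (Fin m) (Fin m) ℝ)
    (B D dB dD : Fin p → Matrix (Fin n) (Fin n) ℝ)
    (E F dE dF X Y dX dY : Fin p → Matrix (Fin m) (Fin n) ℝ)
    (al be ga ze ta de : Fin p → ℝ)
    (hal : ∀ k, 0 < al k) (hbe : ∀ k, 0 < be k) (hga : ∀ k, 0 < ga k)
    (hze : ∀ k, 0 < ze k) (hta : ∀ k, 0 < ta k) (hde : ∀ k, 0 < de k)
    (hW : IsUnit (Wmat A C B D))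
    (hsol : ∀ k : Fin p, A k * X k - Y k * B k = E k ∧ C k * X (k + 1) - Y k * D k = F k)
    (hpert : specNorm ((Wmat A C B D)⁻¹ * Wmat dA dC dB dD) < 1)
    (hperturbed : ∀ k : Fin p,
      (A k + dA k) * (X k + dX k) - (Y k + dY k) * (B k + dB k) = E k + dE k ∧
      (C k + dC k) * (X (k + 1) + dX (k + 1)) - (Y k + dY k) * (D k + dD k) = F k + dF k) :
    let ε : ℝ := ⨆ k : Fin p,
      max (frob (dA k) / al k) (max (frob (dB k) / be k) (max (frob (dE k) / ga k)
        (max (frob (dC k) / ze k) (max (frob (dD k) / ta k) (frob (dF k) / de k)))))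
    l2norm (bigVec dX dY) ≤
      Real.sqrt (6 * (p : ℝ)) *
          specNorm ((Wmat A C B D)⁻¹ * Hmat X Y al be ga ze ta de) * ε /
        (1 - specNorm ((Wmat A C B D)⁻¹ * Wmat dA dC dB dD)) := by
  intro ε
  set W := Wmat A C B D with hWdef
  set dW := Wmat dA dC dB dD with hdWdef
  set z := bigVec X Y with hzdef
  set dz := bigVec dX dY with hdzdef
  set H := Hmat X Y al be ga ze ta de with hHdef
  set u : Fin p × CIdx m n → ℝ := fun y => match y.2 with
    | Sum.inl a => vecM (dA y.1) a / al y.1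
    | Sum.inr (Sum.inl b) => vecM (dB y.1) b / be y.1
    | Sum.inr (Sum.inr (Sum.inl e)) => vecM (dE y.1) e / ga y.1
    | Sum.inr (Sum.inr (Sum.inr (Sum.inl c))) => vecM (dC y.1) c / ze y.1
    | Sum.inr (Sum.inr (Sum.inr (Sum.inr (Sum.inl d)))) => vecM (dD y.1) d / ta y.1
    | Sum.inr (Sum.inr (Sum.inr (Sum.inr (Sum.inr f)))) => vecM (dF y.1) f / de y.1
    with hudef
  -- basic equations
  have hE : (fun k => A k * X k - Y k * B k) = E := funext fun k => (hsol k).1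
  have hF : (fun k => C k * X (k + 1) - Y k * D k) = F := funext fun k => (hsol k).2
  have h1 : W.mulVec z = bigVec E F := by
    rw [hWdef, hzdef, Wmat_mulVec, hE, hF]
  have hE2 : (fun k => (A k + dA k) * (X k + dX k) - (Y k + dY k) * (B k + dB k)) =
      (fun k => E k + dE k) := funext fun k => (hperturbed k).1
  have hF2 : (fun k => (C k + dC k) * (X (k + 1) + dX (k + 1)) - (Y k + dY k) * (D k + dD k)) =
      (fun k => F k + dF k) := funext fun k => (hperturbed k).2
  have h2 : (W + dW).mulVec (z + dz) = bigVec E F + bigVec dE dF := by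
    rw [hWdef, hdWdef, hzdef, hdzdef, ← Wmat_add, ← bigVec_add, Wmat_mulVec, hE2, hF2,
      bigVec_add]
  have h2' : W.mulVec z + W.mulVec dz + (dW.mulVec z + dW.mulVec dz) =
      bigVec E F + bigVec dE dF := by
    rw [← Matrix.mulVec_add, ← Matrix.mulVec_add, ← Matrix.add_mulVec]
    exact h2
  have h3 : W.mulVec dz = bigVec dE dF - dW.mulVec z - dW.mulVec dz := by
    funext x
    have hx := congrFun h2' x
    have hx1 := congrFun h1 x
    simp only [Pi.add_apply, Pi.sub_apply] at hx hx1 ⊢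
    linarith
  have hHu : H.mulVec u = dW.mulVec z - bigVec dE dF := by
    rw [hHdef, hudef,
      Hmat_mulVec X Y al be ga ze ta de (fun k => (hal k).ne') (fun k => (hbe k).ne')
        (fun k => (hga k).ne') (fun k => (hze k).ne') (fun k => (hta k).ne')
        (fun k => (hde k).ne') dA dC dB dD dE dF,
      hdWdef, hzdef, Wmat_mulVec, ← bigVec_sub]
  have hWdet : IsUnit W.det := (Matrix.isUnit_iff_isUnit_det W).mp hW
  have hinv : W⁻¹ * W = 1 := Matrix.nonsing_inv_mul W hWdet
  have hdz : dz = -((W⁻¹ * H).mulVec u) - (W⁻¹ * dW).mulVec dz := by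
    have hid : W⁻¹.mulVec (W.mulVec dz) = dz := by
      rw [Matrix.mulVec_mulVec, hinv, Matrix.one_mulVec]
    have hrhs : bigVec dE dF - dW.mulVec z - dW.mulVec dz =
        -(H.mulVec u) - dW.mulVec dz := by
      rw [hHu]; abel
    calc dz = W⁻¹.mulVec (W.mulVec dz) := hid.symm
      _ = W⁻¹.mulVec (-(H.mulVec u) - dW.mulVec dz) := by rw [h3, hrhs]
      _ = -((W⁻¹ * H).mulVec u) - (W⁻¹ * dW).mulVec dz := by
          rw [Matrix.mulVec_sub, Matrix.mulVec_neg, Matrix.mulVec_mulVec,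
            Matrix.mulVec_mulVec]
  -- epsilon bounds
  have hbdd : ∀ (f : Fin p → ℝ), BddAbove (Set.range f) := fun f => (Set.finite_range f).bddAbove
  have hsup : ∀ k : Fin p,
      max (frob (dA k) / al k) (max (frob (dB k) / be k) (max (frob (dE k) / ga k)
        (max (frob (dC k) / ze k) (max (frob (dD k) / ta k) (frob (dF k) / de k))))) ≤ ε := by
    intro k
    have hεdef : ε = ⨆ k : Fin p,
      max (frob (dA k) / al k) (max (frob (dB k) / be k) (max (frob (dE k) / ga k)
        (max (frob (dC k) / ze k) (max (frob (dD k) / ta k) (frob (dF k) / de k))))) := rfl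
    rw [hεdef]
    exact le_ciSup (f := fun k : Fin p =>
      max (frob (dA k) / al k) (max (frob (dB k) / be k) (max (frob (dE k) / ga k)
        (max (frob (dC k) / ze k) (max (frob (dD k) / ta k) (frob (dF k) / de k))))))
      (hbdd _) k
  have hεA : ∀ k, frob (dA k) / al k ≤ ε := fun k => le_trans (le_max_left _ _) (hsup k)
  have hεB : ∀ k, frob (dB k) / be k ≤ ε := fun k =>
    le_trans (le_trans (le_max_left _ _) (le_max_right _ _)) (hsup k)
  have hεE : ∀ k, frob (dE k) / ga k ≤ ε := fun k =>
    le_trans (le_trans (le_trans (le_max_left _ _) (le_max_right _ _)) (le_max_right _ _))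
      (hsup k)
  have hεC : ∀ k, frob (dC k) / ze k ≤ ε := fun k =>
    le_trans (le_trans (le_trans (le_trans (le_max_left _ _) (le_max_right _ _))
      (le_max_right _ _)) (le_max_right _ _)) (hsup k)
  have hεD : ∀ k, frob (dD k) / ta k ≤ ε := fun k =>
    le_trans (le_trans (le_trans (le_trans (le_trans (le_max_left _ _) (le_max_right _ _))
      (le_max_right _ _)) (le_max_right _ _)) (le_max_right _ _)) (hsup k)
  have hεF : ∀ k, frob (dF k) / de k ≤ ε := fun k =>
    le_trans (le_trans (le_trans (le_trans (le_trans (le_max_right _ _) (le_max_right _ _))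
      (le_max_right _ _)) (le_max_right _ _)) (le_max_right _ _)) (hsup k)
  have hε0 : 0 ≤ ε :=
    le_trans (div_nonneg (frob_nonneg _) (hal 0).le) (hεA 0)
  -- bound on ‖u‖
  have hu : l2norm u ≤ Real.sqrt (6 * (p : ℝ)) * ε := by
    have hsum : ∑ y, u y ^ 2 = ∑ k : Fin p,
        ((frob (dA k) / al k) ^ 2 + ((frob (dB k) / be k) ^ 2 + ((frob (dE k) / ga k) ^ 2 +
          ((frob (dC k) / ze k) ^ 2 + ((frob (dD k) / ta k) ^ 2 +
            (frob (dF k) / de k) ^ 2))))) := by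
      rw [Fintype.sum_prod_type]
      refine Finset.sum_congr rfl (fun k _ => ?_)
      rw [Fintype.sum_sum_type, Fintype.sum_sum_type, Fintype.sum_sum_type,
        Fintype.sum_sum_type, Fintype.sum_sum_type]
      simp only [hudef]
      rw [frob_block _ _ (hal k), frob_block _ _ (hbe k), frob_block _ _ (hga k),
        frob_block _ _ (hze k), frob_block _ _ (hta k), frob_block _ _ (hde k)]
    have hle : ∑ y, u y ^ 2 ≤ (p : ℝ) * (6 * ε ^ 2) := by
      rw [hsum]
      calc ∑ k : Fin p, ((frob (dA k) / al k) ^ 2 + ((frob (dB k) / be k) ^ 2 +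
              ((frob (dE k) / ga k) ^ 2 + ((frob (dC k) / ze k) ^ 2 +
                ((frob (dD k) / ta k) ^ 2 + (frob (dF k) / de k) ^ 2)))))
          ≤ ∑ _k : Fin p, (6 * ε ^ 2) := by
            refine Finset.sum_le_sum (fun k _ => ?_)
            have b1 := pow_le_pow_left₀ (div_nonneg (frob_nonneg _) (hal k).le) (hεA k) 2
            have b2 := pow_le_pow_left₀ (div_nonneg (frob_nonneg _) (hbe k).le) (hεB k) 2
            have b3 := pow_le_pow_left₀ (div_nonneg (frob_nonneg _) (hga k).le) (hεE k) 2
            have b4 := pow_le_pow_left₀ (div_nonneg (frob_nonneg _) (hze k).le) (hεC k) 2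
            have b5 := pow_le_pow_left₀ (div_nonneg (frob_nonneg _) (hta k).le) (hεD k) 2
            have b6 := pow_le_pow_left₀ (div_nonneg (frob_nonneg _) (hde k).le) (hεF k) 2
            linarith
        _ = (p : ℝ) * (6 * ε ^ 2) := by
            rw [Finset.sum_const, Finset.card_univ, Fintype.card_fin, nsmul_eq_mul]
    have : l2norm u ≤ Real.sqrt ((p : ℝ) * (6 * ε ^ 2)) := by
      rw [l2norm]
      exact Real.sqrt_le_sqrt hle
    calc l2norm u ≤ Real.sqrt ((p : ℝ) * (6 * ε ^ 2)) := this
      _ = Real.sqrt (6 * (p : ℝ)) * ε := by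
          rw [show (p : ℝ) * (6 * ε ^ 2) = (6 * (p : ℝ)) * ε ^ 2 by ring,
            Real.sqrt_mul (by positivity), Real.sqrt_sq hε0]
  -- combine
  set N := specNorm (W⁻¹ * H) with hNdef
  set sN := specNorm (W⁻¹ * dW) with hsNdef
  have hN0 : 0 ≤ N := specNorm_nonneg _
  have hstep : l2norm dz ≤ N * l2norm u + sN * l2norm dz := by
    calc l2norm dz = l2norm (-((W⁻¹ * H).mulVec u) + -((W⁻¹ * dW).mulVec dz)) := by
          conv_lhs => rw [hdz, sub_eq_add_neg]
      _ ≤ l2norm (-((W⁻¹ * H).mulVec u)) + l2norm (-((W⁻¹ * dW).mulVec dz)) :=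
          l2norm_add_le _ _
      _ = l2norm ((W⁻¹ * H).mulVec u) + l2norm ((W⁻¹ * dW).mulVec dz) := by
          rw [l2norm_neg, l2norm_neg]
      _ ≤ N * l2norm u + sN * l2norm dz :=
          add_le_add (l2norm_mulVec_le _ _) (l2norm_mulVec_le _ _)
  have h1s : 0 < 1 - sN := by linarith [hpert]
  rw [le_div_iff₀ h1s]
  have h5 : N * l2norm u ≤ N * (Real.sqrt (6 * (p : ℝ)) * ε) :=
    mul_le_mul_of_nonneg_left hu hN0
  nlinarith [hstep, h5]
end
end

section
/- Assume ‖W⁻¹ΔW‖₂ < 1, z ≠ 0, and g ≠ 0, and let k_E = ‖W⁻¹‖₂‖g‖₂/‖z‖₂ and κ(W) = ‖W‖₂‖W⁻¹‖₂. If (ΔX_k, ΔY_k) solves the perturbed PGCS equation, then ‖Δz‖₂/‖z‖₂ ≤ [ (‖Δg‖₂/‖g‖₂)·k_E + (‖ΔW‖₂/‖W‖₂)·κ(W) ] / (1 − ‖W⁻¹ΔW‖₂). -/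
open Matrix
open scoped Kronecker

noncomputable section

variable {m n p : ℕ}

namespace PGCSaux

variable {ι κ : Type*} [Fintype ι] [Fintype κ]

def toEuc (v : ι → ℝ) : EuclideanSpace ℝ ι := (WithLp.equiv 2 (ι → ℝ)).symm v

lemma l2norm_eq (v : ι → ℝ) : l2norm v = ‖toEuc v‖ := by
  rw [EuclideanSpace.norm_eq]
  simp [l2norm, toEuc, Real.norm_eq_abs, sq_abs]

lemma toEuc_sub (u v : ι → ℝ) : toEuc (u - v) = toEuc u - toEuc v := rfl

def mclm [DecidableEq κ] (M : Matrix ι κ ℝ) : EuclideanSpace ℝ κ →L[ℝ] EuclideanSpace ℝ ι :=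
  LinearMap.toContinuousLinearMap (Matrix.toEuclideanLin M)

lemma mclm_apply [DecidableEq κ] (M : Matrix ι κ ℝ) (v : κ → ℝ) :
    mclm M (toEuc v) = toEuc (M.mulVec v) := rfl

lemma specNorm_eq [DecidableEq κ] (M : Matrix ι κ ℝ) : specNorm M = ‖mclm M‖ := by
  rw [← (mclm M).sSup_unitClosedBall_eq_norm]
  apply congrArg sSup
  ext r
  constructor
  · rintro ⟨v, hv, rfl⟩
    exact ⟨toEuc v, by simpa [Metric.mem_closedBall, dist_zero_right, ← l2norm_eq] using hv,
      by show ‖mclm M (toEuc v)‖ = _; rw [mclm_apply, ← l2norm_eq]⟩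
  · rintro ⟨x, hx, rfl⟩
    refine ⟨(WithLp.equiv 2 (κ → ℝ)) x, ?_, ?_⟩
    · simpa [l2norm_eq, toEuc, Metric.mem_closedBall, dist_zero_right] using hx
    · show l2norm (M.mulVec _) = ‖mclm M x‖
      rw [l2norm_eq, ← mclm_apply]
      rfl

lemma l2norm_mulVec_le [DecidableEq κ] (M : Matrix ι κ ℝ) (v : κ → ℝ) :
    l2norm (M.mulVec v) ≤ specNorm M * l2norm v := by
  rw [specNorm_eq, l2norm_eq, l2norm_eq, ← mclm_apply]
  exact (mclm M).le_opNorm _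

lemma specNorm_nonneg [DecidableEq κ] (M : Matrix ι κ ℝ) : 0 ≤ specNorm M := by
  rw [specNorm_eq]; exact norm_nonneg _

lemma l2norm_nonneg (v : ι → ℝ) : 0 ≤ l2norm v := Real.sqrt_nonneg _

lemma l2norm_pos {v : ι → ℝ} (hv : v ≠ 0) : 0 < l2norm v := by
  rw [l2norm_eq, norm_pos_iff]
  intro h
  exact hv ((WithLp.equiv 2 (ι → ℝ)).symm.injective (by simpa [toEuc] using h))

lemma specNorm_pos [DecidableEq κ] {M : Matrix ι κ ℝ} (hM : M ≠ 0) : 0 < specNorm M := by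
  rw [specNorm_eq, norm_pos_iff]
  intro h
  apply hM
  have hv : ∀ v : κ → ℝ, M.mulVec v = 0 := by
    intro v
    have : mclm M (toEuc v) = 0 := by rw [h]; rfl
    rw [mclm_apply] at this
    exact (WithLp.equiv 2 (ι → ℝ)).symm.injective (by simpa [toEuc] using this)
  ext i j
  have := congrFun (hv (Pi.single j 1)) i
  simpa [Matrix.mulVec_single_one] using this

lemma l2norm_sub_sub_le (u v w : ι → ℝ) :
    l2norm (u - v - w) ≤ l2norm u + l2norm v + l2norm w := by
  simp only [l2norm_eq, toEuc_sub]
  calc ‖toEuc u - toEuc v - toEuc w‖ ≤ ‖toEuc u - toEuc v‖ + ‖toEuc w‖ := norm_sub_le _ _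
    _ ≤ ‖toEuc u‖ + ‖toEuc v‖ + ‖toEuc w‖ := by
        have := norm_sub_le (toEuc u) (toEuc v); linarith

end PGCSaux

section PGCSaux2
variable {m n p : ℕ}

lemma W_mulVec' [NeZero p] (A C : Fin p → Matrix (Fin m) (Fin m) ℝ)
    (B D : Fin p → Matrix (Fin n) (Fin n) ℝ)
    (E F X Y : Fin p → Matrix (Fin m) (Fin n) ℝ)
    (h : ∀ k : Fin p, A k * X k - Y k * B k = E k ∧ C k * X (k + 1) - Y k * D k = F k) :
    (Wmat A C B D).mulVec (bigVec X Y) = bigVec E F := by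
  funext x
  obtain ⟨k, s, j, i⟩ := x
  rw [Matrix.mulVec, dotProduct]
  simp only [Fintype.sum_prod_type]
  fin_cases s
  · have hE := (h k).1
    simp only [Fin.zero_eta, Fin.mk_one, Fin.isValue, Wmat, bigVec, vecM, Matrix.of_apply,
      add_mul, ite_mul, zero_mul, Finset.sum_add_distrib, kroneckerMap_apply, Matrix.one_apply,
      Matrix.neg_apply, if_true, eq_self_iff_true, and_true, true_and,
      (by decide : ((0:Fin 2) = 1) = False), (by decide : ((1:Fin 2) = 0) = False),
      if_false, and_false, false_and, Finset.sum_const_zero, add_zero, zero_add,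
      Matrix.transpose_apply, one_mul, mul_ite, mul_zero, mul_one, neg_mul,
      Finset.sum_ite_eq, Finset.sum_ite_eq', Finset.mem_univ, if_pos, Finset.sum_neg_distrib]
    rw [← hE]
    simp [Matrix.mul_apply, Matrix.sub_apply, Finset.sum_add_distrib, Finset.sum_ite_eq,
      mul_comm, sub_eq_add_neg]
  · have hF := (h k).2
    simp only [Fin.zero_eta, Fin.mk_one, Fin.isValue, Wmat, bigVec, vecM, Matrix.of_apply,
      add_mul, ite_mul, zero_mul, Finset.sum_add_distrib, kroneckerMap_apply, Matrix.one_apply,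
      Matrix.neg_apply, if_true, eq_self_iff_true, and_true, true_and,
      (by decide : ((0:Fin 2) = 1) = False), (by decide : ((1:Fin 2) = 0) = False),
      if_false, and_false, false_and, Finset.sum_const_zero, add_zero, zero_add,
      Matrix.transpose_apply, one_mul, mul_ite, mul_zero, mul_one, neg_mul,
      Finset.sum_ite_eq, Finset.sum_ite_eq', Finset.mem_univ, if_pos, Finset.sum_neg_distrib]
    rw [← hF]
    simp [Matrix.mul_apply, Matrix.sub_apply, Finset.sum_add_distrib, Finset.sum_ite_eq,
      mul_comm, sub_eq_add_neg]

lemma Wmat_add' [NeZero p] (A C dA dC : Fin p → Matrix (Fin m) (Fin m) ℝ)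
    (B D dB dD : Fin p → Matrix (Fin n) (Fin n) ℝ) :
    Wmat (fun k => A k + dA k) (fun k => C k + dC k) (fun k => B k + dB k)
      (fun k => D k + dD k) = Wmat A C B D + Wmat dA dC dB dD := by
  ext x y
  simp only [Wmat, Matrix.of_apply, Matrix.add_apply, kroneckerMap_apply, Matrix.one_apply,
    Matrix.neg_apply, Matrix.transpose_apply]
  split_ifs <;> ring

lemma bigVec_add' (X Y dX dY : Fin p → Matrix (Fin m) (Fin n) ℝ) :
    bigVec (fun k => X k + dX k) (fun k => Y k + dY k) = bigVec X Y + bigVec dX dY := by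
  funext x
  simp only [bigVec, vecM, Matrix.add_apply, Pi.add_apply]
  split_ifs <;> rfl

end PGCSaux2

/-- relative perturbation bound via the effective condition number `k_E`
and the condition number `κ(W)`. -/
theorem effective_condition_bound (m n p : ℕ) [NeZero m] [NeZero n] [NeZero p]
    (A C dA dC : Fin p → Matrix (Fin m) (Fin m) ℝ)
    (B D dB dD : Fin p → Matrix (Fin n) (Fin n) ℝ)
    (E F dE dF X Y dX dY : Fin p → Matrix (Fin m) (Fin n) ℝ)
    (hW : IsUnit (Wmat A C B D))
    (hsol : ∀ k : Fin p, A k * X k - Y k * B k = E k ∧ C k * X (k + 1) - Y k * D k = F k)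
    (hpert : specNorm ((Wmat A C B D)⁻¹ * Wmat dA dC dB dD) < 1)
    (hz : bigVec X Y ≠ 0) (hg : bigVec E F ≠ 0)
    (hperturbed : ∀ k : Fin p,
      (A k + dA k) * (X k + dX k) - (Y k + dY k) * (B k + dB k) = E k + dE k ∧
      (C k + dC k) * (X (k + 1) + dX (k + 1)) - (Y k + dY k) * (D k + dD k) = F k + dF k) :
    let kE : ℝ := specNorm (Wmat A C B D)⁻¹ * l2norm (bigVec E F) / l2norm (bigVec X Y)
    let κW : ℝ := specNorm (Wmat A C B D) * specNorm (Wmat A C B D)⁻¹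
    l2norm (bigVec dX dY) / l2norm (bigVec X Y) ≤
      ((l2norm (bigVec dE dF) / l2norm (bigVec E F)) * kE +
          (specNorm (Wmat dA dC dB dD) / specNorm (Wmat A C B D)) * κW) /
        (1 - specNorm ((Wmat A C B D)⁻¹ * Wmat dA dC dB dD)) := by
  intro kE kW
  classical
  set W := Wmat A C B D with hWdef
  set dW := Wmat dA dC dB dD with hdWdef
  set z := bigVec X Y
  set dz := bigVec dX dY
  set g := bigVec E F
  set dg := bigVec dE dF
  have h1 : W.mulVec z = g := W_mulVec' A C B D E F X Y hsol
  have h2 : (W + dW).mulVec (z + dz) = g + dg := by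
    rw [hWdef, hdWdef, ← Wmat_add', ← bigVec_add' X Y dX dY, ← bigVec_add' E F dE dF]
    exact W_mulVec' _ _ _ _ _ _ _ _ hperturbed
  have h3 : W.mulVec dz = dg - dW.mulVec z - dW.mulVec dz := by
    have := h2
    rw [Matrix.add_mulVec, Matrix.mulVec_add, Matrix.mulVec_add, h1] at this
    funext i
    have := congrFun this i
    simp only [Pi.add_apply, Pi.sub_apply] at *
    linarith
  have hdet : IsUnit W.det := (Matrix.isUnit_iff_isUnit_det W).mp hW
  have h4 : dz = (W⁻¹).mulVec dg - (W⁻¹).mulVec (dW.mulVec z) - (W⁻¹).mulVec (dW.mulVec dz) := by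
    have hthis : dz = (W⁻¹).mulVec (W.mulVec dz) := by
      rw [Matrix.mulVec_mulVec, Matrix.nonsing_inv_mul W hdet, Matrix.one_mulVec]
    conv_lhs => rw [hthis]
    rw [h3, Matrix.mulVec_sub, Matrix.mulVec_sub]
  set r := specNorm (W⁻¹ * dW) with hr
  set sI := specNorm W⁻¹
  set sW := specNorm W
  set sd := specNorm dW
  set a := l2norm dz
  set Nz := l2norm z
  set Ng := l2norm g
  set Nd := l2norm dg
  have hNz : 0 < Nz := PGCSaux.l2norm_pos hz
  have hNg : 0 < Ng := PGCSaux.l2norm_pos hg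
  have hWne : W ≠ 0 := by
    intro h0
    have : Nonempty (BIdx m n p) := by
      refine ⟨⟨⟨0, Nat.pos_of_ne_zero (NeZero.ne p)⟩, 0, ⟨0, Nat.pos_of_ne_zero (NeZero.ne n)⟩,
        ⟨0, Nat.pos_of_ne_zero (NeZero.ne m)⟩⟩⟩
    exact (hW.ne_zero) h0
  have hsW : 0 < sW := PGCSaux.specNorm_pos hWne
  have h1r : 0 < 1 - r := by linarith [hpert]
  have key : a * (1 - r) ≤ sI * Nd + sI * (sd * Nz) := by
    have hb : a ≤ sI * Nd + sI * (sd * Nz) + r * a := by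
      calc a = l2norm ((W⁻¹).mulVec dg - (W⁻¹).mulVec (dW.mulVec z) - (W⁻¹).mulVec (dW.mulVec dz)) := by
              rw [← h4]
        _ ≤ l2norm ((W⁻¹).mulVec dg) + l2norm ((W⁻¹).mulVec (dW.mulVec z)) +
              l2norm ((W⁻¹).mulVec (dW.mulVec dz)) := PGCSaux.l2norm_sub_sub_le _ _ _
        _ ≤ sI * Nd + sI * (sd * Nz) + r * a := by
              have t1 := PGCSaux.l2norm_mulVec_le W⁻¹ dg
              have t2 := PGCSaux.l2norm_mulVec_le W⁻¹ (dW.mulVec z)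
              have t2' := PGCSaux.l2norm_mulVec_le dW z
              have t3 : l2norm ((W⁻¹).mulVec (dW.mulVec dz)) ≤ r * a := by
                rw [Matrix.mulVec_mulVec]
                exact PGCSaux.l2norm_mulVec_le _ _
              have hsI : 0 ≤ sI := PGCSaux.specNorm_nonneg _
              nlinarith [PGCSaux.l2norm_nonneg (dW.mulVec z)]
    nlinarith
  have hkE : kE = sI * Ng / Nz := rfl
  have hkW : kW = sW * sI := rfl
  rw [hkE, hkW]
  rw [div_le_div_iff₀ hNz (by positivity)]
  have hexp : (Nd / Ng * (sI * Ng / Nz) + sd / sW * (sW * sI)) * Nz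
      = sI * Nd + sI * (sd * Nz) := by
    field_simp
  rw [hexp]
  nlinarith [key, hNz.le, h1r.le]
end
end

section
/- If the spectral radius of |W⁻¹ΔW| is strictly less than 1, then the perturbed PGCS equation has a unique solution (ΔX_1, ΔY_1, …, ΔX_p, ΔY_p), the matrix I − |W⁻¹ΔW| is invertible, and the solution satisfies the entrywise inequality |Δz| ≤ (I − |W⁻¹ΔW|)⁻¹ |W⁻¹(Δg − ΔW z)|. -/
open Matrix
open scoped Kronecker

noncomputable section

variable {m n p : ℕ}

namespace PGCSaux

open Filter Topology Finset
open scoped ENNReal NNReal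

attribute [local instance] Matrix.linftyOpNormedRing Matrix.linftyOpNormedAlgebra

section spectral

variable {ι : Type*} [Fintype ι] [DecidableEq ι]

/-- complexification of a real matrix -/
def cxM (M : Matrix ι ι ℝ) : Matrix ι ι ℂ := M.map Complex.ofReal

lemma specRad_def (M : Matrix ι ι ℝ) : specRad M = spectralRadius ℂ (cxM M) := rfl

lemma cxM_pow (M : Matrix ι ι ℝ) (k : ℕ) : cxM (M ^ k) = cxM M ^ k := by
  simpa [cxM, Complex.ofRealHom] using
    map_pow (Complex.ofRealHom.mapMatrix (m := ι)) M k

lemma cxM_nnnorm (M : Matrix ι ι ℝ) : ‖cxM M‖₊ = ‖M‖₊ := by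
  simp [Matrix.linfty_opNNNorm_def, cxM, Matrix.map_apply]

lemma entry_abs_pow_le {M N : Matrix ι ι ℝ} (h : ∀ i j, |M i j| ≤ N i j) :
    ∀ (k : ℕ) (i j : ι), |(M ^ k) i j| ≤ (N ^ k) i j := by
  intro k
  induction k with
  | zero =>
      intro i j
      simp only [pow_zero, Matrix.one_apply]
      split <;> simp
  | succ k ih =>
      intro i j
      rw [pow_succ, pow_succ, Matrix.mul_apply, Matrix.mul_apply]
      calc |∑ l, (M ^ k) i l * M l j| ≤ ∑ l, |(M ^ k) i l * M l j| :=
            Finset.abs_sum_le_sum_abs _ _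
        _ ≤ ∑ l, (N ^ k) i l * N l j := by
            refine Finset.sum_le_sum fun l _ => ?_
            rw [abs_mul]
            exact mul_le_mul (ih i l) (h l j) (abs_nonneg _) ((abs_nonneg _).trans (ih i l))

lemma nnnorm_le_of_entry_le [Nonempty ι] {M N : Matrix ι ι ℝ}
    (h : ∀ i j, |M i j| ≤ N i j) : ‖M‖₊ ≤ ‖N‖₊ := by
  rw [Matrix.linfty_opNNNorm_def, Matrix.linfty_opNNNorm_def]
  refine Finset.sup_mono_fun fun i _ => Finset.sum_le_sum fun j _ => ?_
  rw [← NNReal.coe_le_coe]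
  simp only [coe_nnnorm, Real.norm_eq_abs]
  exact (h i j).trans (le_abs_self _)

lemma gelfand (M : Matrix ι ι ℝ) :
    Tendsto (fun k : ℕ => (‖M ^ k‖₊ : ℝ≥0∞) ^ (1 / k : ℝ)) atTop (𝓝 (specRad M)) := by
  have h := spectrum.pow_nnnorm_pow_one_div_tendsto_nhds_spectralRadius (cxM M)
  have heq : (fun k : ℕ => (‖M ^ k‖₊ : ℝ≥0∞) ^ (1 / k : ℝ)) =
      fun k : ℕ => (‖cxM M ^ k‖₊ : ℝ≥0∞) ^ (1 / k : ℝ) := by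
    funext k; rw [← cxM_pow, cxM_nnnorm]
  rw [specRad_def, heq]
  exact h

lemma specRad_mono [Nonempty ι] {M N : Matrix ι ι ℝ} (h : ∀ i j, |M i j| ≤ N i j) :
    specRad M ≤ specRad N := by
  calc specRad M ≤ atTop.liminf fun k : ℕ => (‖cxM M ^ k‖₊ : ℝ≥0∞) ^ (1 / k : ℝ) := by
        rw [specRad_def]
        exact spectrum.spectralRadius_le_liminf_pow_nnnorm_pow_one_div ℂ (cxM M)
    _ ≤ atTop.liminf fun k : ℕ => (‖N ^ k‖₊ : ℝ≥0∞) ^ (1 / k : ℝ) := by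
        refine Filter.liminf_le_liminf (Eventually.of_forall fun k => ?_)
        have h1 : ‖cxM M ^ k‖₊ ≤ ‖N ^ k‖₊ := by
          rw [← cxM_pow, cxM_nnnorm]
          exact nnnorm_le_of_entry_le (entry_abs_pow_le h k)
        exact ENNReal.rpow_le_rpow (ENNReal.coe_le_coe.2 h1)
          (one_div_nonneg.mpr (Nat.cast_nonneg k))
    _ = specRad N := (gelfand N).liminf_eq

lemma summable_pow [Nonempty ι] {Q : Matrix ι ι ℝ} (h : specRad Q < 1) :
    Summable fun k : ℕ => Q ^ k := by
  obtain ⟨r, hr1, hr2⟩ := ENNReal.lt_iff_exists_nnreal_btwn.mp h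
  have hev : ∀ᶠ k : ℕ in atTop, (‖Q ^ k‖₊ : ℝ≥0∞) ^ (1 / k : ℝ) < r :=
    (gelfand Q).eventually_lt_const hr1
  have hrlt : (r : ℝ) < 1 := by exact_mod_cast hr2
  refine Summable.of_norm_bounded_eventually_nat (g := fun k => (r : ℝ) ^ k)
    (summable_geometric_of_lt_one r.coe_nonneg hrlt) ?_
  filter_upwards [hev, eventually_ge_atTop 1] with k hk hk1
  have hk0 : (k : ℝ) ≠ 0 := Nat.cast_ne_zero.mpr (by omega)
  have h2 : ((‖Q ^ k‖₊ : ℝ≥0∞) ^ (1 / k : ℝ)) ^ (k : ℝ) ≤ (r : ℝ≥0∞) ^ (k : ℝ) :=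
    ENNReal.rpow_le_rpow hk.le (Nat.cast_nonneg k)
  rw [← ENNReal.rpow_mul, one_div, inv_mul_cancel₀ hk0, ENNReal.rpow_one,
    ENNReal.rpow_natCast, ← ENNReal.coe_pow, ENNReal.coe_le_coe] at h2
  calc ‖Q ^ k‖ = ((‖Q ^ k‖₊ : ℝ≥0) : ℝ) := (coe_nnnorm _).symm
    _ ≤ ((r ^ k : ℝ≥0) : ℝ) := by exact_mod_cast h2
    _ = (r : ℝ) ^ k := by push_cast; ring

lemma one_sub_mul_tsum [Nonempty ι] {Q : Matrix ι ι ℝ} (h : specRad Q < 1) :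
    (1 - Q) * (∑' k : ℕ, Q ^ k) = 1 ∧ (∑' k : ℕ, Q ^ k) * (1 - Q) = 1 := by
  have hsum := summable_pow h
  have hpow : Tendsto (fun k : ℕ => Q ^ k) atTop (𝓝 0) := hsum.tendsto_atTop_zero
  have hps : Tendsto (fun n : ℕ => ∑ k ∈ Finset.range n, Q ^ k) atTop
      (𝓝 (∑' k : ℕ, Q ^ k)) := hsum.hasSum.tendsto_sum_nat
  constructor
  · have h1 : Tendsto (fun n : ℕ => (1 - Q) * ∑ k ∈ Finset.range n, Q ^ k) atTop
        (𝓝 ((1 - Q) * ∑' k : ℕ, Q ^ k)) := hps.const_mul _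
    have h2 : (fun n : ℕ => (1 - Q) * ∑ k ∈ Finset.range n, Q ^ k) =
        fun n : ℕ => 1 - Q ^ n := by
      funext n
      rw [← neg_sub Q 1, neg_mul, mul_geom_sum, neg_sub]
    rw [h2] at h1
    have h3 : Tendsto (fun n : ℕ => (1 : Matrix ι ι ℝ) - Q ^ n) atTop (𝓝 (1 - 0)) :=
      tendsto_const_nhds.sub hpow
    simpa using tendsto_nhds_unique h1 h3
  · have h1 : Tendsto (fun n : ℕ => (∑ k ∈ Finset.range n, Q ^ k) * (1 - Q)) atTop
        (𝓝 ((∑' k : ℕ, Q ^ k) * (1 - Q))) := hps.mul_const _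
    have h2 : (fun n : ℕ => (∑ k ∈ Finset.range n, Q ^ k) * (1 - Q)) =
        fun n : ℕ => 1 - Q ^ n := by
      funext n
      rw [← neg_sub Q 1, mul_neg, geom_sum_mul, neg_sub]
    rw [h2] at h1
    have h3 : Tendsto (fun n : ℕ => (1 : Matrix ι ι ℝ) - Q ^ n) atTop (𝓝 (1 - 0)) :=
      tendsto_const_nhds.sub hpow
    simpa using tendsto_nhds_unique h1 h3

lemma isUnit_one_sub [Nonempty ι] {Q : Matrix ι ι ℝ} (h : specRad Q < 1) :
    IsUnit (1 - Q) := by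
  obtain ⟨h1, h2⟩ := one_sub_mul_tsum h
  exact ⟨⟨1 - Q, ∑' k : ℕ, Q ^ k, h1, h2⟩, rfl⟩

lemma inv_one_sub_eq [Nonempty ι] {Q : Matrix ι ι ℝ} (h : specRad Q < 1) :
    (1 - Q)⁻¹ = ∑' k : ℕ, Q ^ k :=
  Matrix.inv_eq_right_inv (one_sub_mul_tsum h).1

lemma entry_nonneg_inv_one_sub [Nonempty ι] {N : Matrix ι ι ℝ}
    (hN : ∀ i j, 0 ≤ N i j) (h : specRad N < 1) : ∀ i j, 0 ≤ (1 - N)⁻¹ i j := by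
  intro i j
  rw [inv_one_sub_eq h]
  have hsum := summable_pow h
  have hps : Tendsto (fun n : ℕ => ∑ k ∈ Finset.range n, N ^ k) atTop
      (𝓝 (∑' k : ℕ, N ^ k)) := hsum.hasSum.tendsto_sum_nat
  have hcont : Continuous fun M : Matrix ι ι ℝ => M i j := by
    let φ : Matrix ι ι ℝ →ₗ[ℝ] ℝ :=
      { toFun := fun M => M i j
        map_add' := fun _ _ => rfl
        map_smul' := fun _ _ => rfl }
    exact φ.continuous_of_finiteDimensional
  have h2 : Tendsto (fun n : ℕ => (∑ k ∈ Finset.range n, N ^ k) i j) atTop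
      (𝓝 ((∑' k : ℕ, N ^ k) i j)) := (hcont.tendsto _).comp hps
  refine ge_of_tendsto h2 (Eventually.of_forall fun nn => ?_)
  have hpow : ∀ (k : ℕ) (i j : ι), 0 ≤ (N ^ k) i j := fun k i j =>
    (abs_nonneg _).trans (entry_abs_pow_le (fun i j => (abs_of_nonneg (hN i j)).le) k i j)
  rw [Matrix.sum_apply]
  exact Finset.sum_nonneg fun k _ => hpow k i j

lemma mulVec_mono {P : Matrix ι ι ℝ} (hP : ∀ i j, 0 ≤ P i j) {u v : ι → ℝ}
    (huv : ∀ j, u j ≤ v j) : ∀ i, P.mulVec u i ≤ P.mulVec v i := by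
  intro i
  simp only [Matrix.mulVec, dotProduct]
  exact Finset.sum_le_sum fun j _ => mul_le_mul_of_nonneg_left (huv j) (hP i j)

end spectral

section bookkeeping

variable {m n p : ℕ} [NeZero p]

lemma fin2 : ∀ s : Fin 2, s = 0 ∨ s = 1 := by decide

lemma bigVec_zero (X Y : Fin p → Matrix (Fin m) (Fin n) ℝ) (k : Fin p) (j : Fin n)
    (i : Fin m) : bigVec X Y (k, 0, j, i) = X k i j := by
  simp [bigVec, vecM]

lemma bigVec_one (X Y : Fin p → Matrix (Fin m) (Fin n) ℝ) (k : Fin p) (j : Fin n)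
    (i : Fin m) : bigVec X Y (k, 1, j, i) = Y k i j := by
  simp [bigVec, vecM]

lemma bigVec_add (X Y X' Y' : Fin p → Matrix (Fin m) (Fin n) ℝ) :
    bigVec (fun k => X k + X' k) (fun k => Y k + Y' k) = bigVec X Y + bigVec X' Y' := by
  funext x
  simp only [bigVec, Pi.add_apply]
  split <;> simp [vecM]

lemma Wmat_mulVec (A C : Fin p → Matrix (Fin m) (Fin m) ℝ)
    (B D : Fin p → Matrix (Fin n) (Fin n) ℝ) (X Y : Fin p → Matrix (Fin m) (Fin n) ℝ) :
    (Wmat A C B D).mulVec (bigVec X Y) =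
      bigVec (fun k => A k * X k - Y k * B k) (fun k => C k * X (k + 1) - Y k * D k) := by
  funext x
  obtain ⟨k, s, j, i⟩ := x
  have h01 : (1 : Fin 2) ≠ 0 := by decide
  have h10 : (0 : Fin 2) ≠ 1 := by decide
  rcases fin2 s with rfl | rfl
  · rw [bigVec_zero]
    simp only [Matrix.mulVec, dotProduct, Fintype.sum_prod_type, Fin.sum_univ_two,
      Wmat, Matrix.of_apply, bigVec, vecM, Matrix.kroneckerMap_apply, Matrix.one_apply,
      Matrix.neg_apply, Matrix.transpose_apply, Matrix.sub_apply, Matrix.mul_apply]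
    simp [h01, h10, Finset.sum_ite_eq, Finset.sum_ite_eq', add_mul, ite_mul, zero_mul,
      Finset.sum_add_distrib, mul_comm, Finset.mul_sum, sub_eq_add_neg]
  · rw [bigVec_one]
    simp only [Matrix.mulVec, dotProduct, Fintype.sum_prod_type, Fin.sum_univ_two,
      Wmat, Matrix.of_apply, bigVec, vecM, Matrix.kroneckerMap_apply, Matrix.one_apply,
      Matrix.neg_apply, Matrix.transpose_apply, Matrix.sub_apply, Matrix.mul_apply]
    simp [h01, h10, Finset.sum_ite_eq, Finset.sum_ite_eq', add_mul, ite_mul, zero_mul,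
      Finset.sum_add_distrib, mul_comm, Finset.mul_sum, sub_eq_add_neg]

lemma Wmat_add (A C dA dC : Fin p → Matrix (Fin m) (Fin m) ℝ)
    (B D dB dD : Fin p → Matrix (Fin n) (Fin n) ℝ) :
    Wmat (fun k => A k + dA k) (fun k => C k + dC k) (fun k => B k + dB k)
      (fun k => D k + dD k) = Wmat A C B D + Wmat dA dC dB dD := by
  ext x y
  simp only [Wmat, Matrix.of_apply, Matrix.add_apply, Matrix.kroneckerMap_apply,
    Matrix.transpose_apply, Matrix.neg_apply, Matrix.one_apply, Pi.add_apply]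
  split_ifs <;> ring

lemma system_iff (A C : Fin p → Matrix (Fin m) (Fin m) ℝ)
    (B D : Fin p → Matrix (Fin n) (Fin n) ℝ) (E F X Y : Fin p → Matrix (Fin m) (Fin n) ℝ) :
    (∀ k : Fin p, A k * X k - Y k * B k = E k ∧ C k * X (k + 1) - Y k * D k = F k) ↔
      (Wmat A C B D).mulVec (bigVec X Y) = bigVec E F := by
  rw [Wmat_mulVec]
  constructor
  · intro h
    have h1 : (fun k => A k * X k - Y k * B k) = E := funext fun k => (h k).1
    have h2 : (fun k => C k * X (k + 1) - Y k * D k) = F := funext fun k => (h k).2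
    rw [h1, h2]
  · intro h k
    constructor
    · ext i j
      have := congrFun h (k, 0, j, i)
      rwa [bigVec_zero, bigVec_zero] at this
    · ext i j
      have := congrFun h (k, 1, j, i)
      rwa [bigVec_one, bigVec_one] at this

end bookkeeping

end PGCSaux

/-- if the spectral radius of `|W⁻¹ΔW|` is less than one, the perturbed
PGCS equation has a unique solution, `I − |W⁻¹ΔW|` is invertible, and
`|Δz| ≤ (I − |W⁻¹ΔW|)⁻¹ |W⁻¹(Δg − ΔW z)|` entrywise. -/
theorem componentwise_perturbation_bound (m n p : ℕ) [NeZero m] [NeZero n] [NeZero p]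
    (A C dA dC : Fin p → Matrix (Fin m) (Fin m) ℝ)
    (B D dB dD : Fin p → Matrix (Fin n) (Fin n) ℝ)
    (E F dE dF X Y : Fin p → Matrix (Fin m) (Fin n) ℝ)
    (hW : IsUnit (Wmat A C B D))
    (hsol : ∀ k : Fin p, A k * X k - Y k * B k = E k ∧ C k * X (k + 1) - Y k * D k = F k)
    (hrad : specRad (matAbs ((Wmat A C B D)⁻¹ * Wmat dA dC dB dD)) < 1) :
    (∃! S : (Fin p → Matrix (Fin m) (Fin n) ℝ) × (Fin p → Matrix (Fin m) (Fin n) ℝ),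
        ∀ k : Fin p,
          (A k + dA k) * (X k + S.1 k) - (Y k + S.2 k) * (B k + dB k) = E k + dE k ∧
          (C k + dC k) * (X (k + 1) + S.1 (k + 1)) - (Y k + S.2 k) * (D k + dD k) =
            F k + dF k) ∧
      IsUnit (1 - matAbs ((Wmat A C B D)⁻¹ * Wmat dA dC dB dD)) ∧
      ∀ dX dY : Fin p → Matrix (Fin m) (Fin n) ℝ,
        (∀ k : Fin p,
          (A k + dA k) * (X k + dX k) - (Y k + dY k) * (B k + dB k) = E k + dE k ∧
          (C k + dC k) * (X (k + 1) + dX (k + 1)) - (Y k + dY k) * (D k + dD k) =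
            F k + dF k) →
        ∀ i, |bigVec dX dY i| ≤
          ((1 - matAbs ((Wmat A C B D)⁻¹ * Wmat dA dC dB dD))⁻¹.mulVec
            (fun j => |((Wmat A C B D)⁻¹.mulVec
              (bigVec dE dF - (Wmat dA dC dB dD).mulVec (bigVec X Y))) j|)) i := by
  classical
  open PGCSaux in
  set W := Wmat A C B D with hWdef
  set dW := Wmat dA dC dB dD with hdWdef
  set M := W⁻¹ * dW with hMdef
  set N := matAbs M with hNdef
  have hdet : IsUnit W.det := (Matrix.isUnit_iff_isUnit_det W).mp hW
  have hWl : W⁻¹ * W = 1 := Matrix.nonsing_inv_mul W hdet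
  have hWr : W * W⁻¹ = 1 := Matrix.mul_nonsing_inv W hdet
  have hNnn : ∀ i j, (0 : ℝ) ≤ N i j := fun i j => abs_nonneg _
  have hradM : specRad (-M) < 1 := by
    refine lt_of_le_of_lt (specRad_mono fun i j => ?_) hrad
    simp [hNdef, matAbs]
  have hIM : IsUnit (1 + M) := by
    have := isUnit_one_sub hradM
    rwa [sub_neg_eq_add] at this
  have hWdW : W + dW = W * (1 + M) := by
    rw [mul_add, mul_one, hMdef, ← mul_assoc, hWr, one_mul]
  have hUnitS : IsUnit (W + dW) := hWdW ▸ hW.mul hIM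
  have h1N : IsUnit (1 - N) := isUnit_one_sub hrad
  have hPnn : ∀ i j, 0 ≤ (1 - N)⁻¹ i j := entry_nonneg_inv_one_sub hNnn hrad
  have hz : W.mulVec (bigVec X Y) = bigVec E F := (system_iff A C B D E F X Y).mp hsol
  have hiff : ∀ dX dY : Fin p → Matrix (Fin m) (Fin n) ℝ,
      (∀ k : Fin p,
          (A k + dA k) * (X k + dX k) - (Y k + dY k) * (B k + dB k) = E k + dE k ∧
          (C k + dC k) * (X (k + 1) + dX (k + 1)) - (Y k + dY k) * (D k + dD k) =
            F k + dF k) ↔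
        (W + dW).mulVec (bigVec dX dY) = bigVec dE dF - dW.mulVec (bigVec X Y) := by
    intro dX dY
    have hs := system_iff (fun k => A k + dA k) (fun k => C k + dC k)
      (fun k => B k + dB k) (fun k => D k + dD k) (fun k => E k + dE k)
      (fun k => F k + dF k) (fun k => X k + dX k) (fun k => Y k + dY k)
    rw [Wmat_add, bigVec_add, bigVec_add] at hs
    rw [hs, Matrix.mulVec_add, Matrix.add_mulVec, hz]
    constructor
    · intro hh
      have : (W + dW).mulVec (bigVec dX dY) =
          (bigVec E F + bigVec dE dF) - (bigVec E F + dW.mulVec (bigVec X Y)) := by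
        rw [← hh]; abel
      rw [this]; abel
    · intro hh; rw [hh]; abel
  have hdetS : IsUnit (W + dW).det := (Matrix.isUnit_iff_isUnit_det _).mp hUnitS
  have hSl : (W + dW)⁻¹ * (W + dW) = 1 := Matrix.nonsing_inv_mul _ hdetS
  have hSr : (W + dW) * (W + dW)⁻¹ = 1 := Matrix.mul_nonsing_inv _ hdetS
  refine ⟨?_, h1N, ?_⟩
  · set v0 : BIdx m n p → ℝ :=
      (W + dW)⁻¹.mulVec (bigVec dE dF - dW.mulVec (bigVec X Y)) with hv0
    refine ⟨⟨fun k => Matrix.of fun i j => v0 (k, 0, j, i),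
             fun k => Matrix.of fun i j => v0 (k, 1, j, i)⟩, ?_, ?_⟩
    · have hbv : bigVec (fun k => Matrix.of fun i j => v0 (k, 0, j, i))
          (fun k => Matrix.of fun i j => v0 (k, 1, j, i)) = v0 := by
        funext x
        obtain ⟨k, s, j, i⟩ := x
        rcases fin2 s with rfl | rfl
        · rw [bigVec_zero]; rfl
        · rw [bigVec_one]; rfl
      refine (hiff _ _).mpr ?_
      rw [hbv, hv0, Matrix.mulVec_mulVec, hSr, Matrix.one_mulVec]
    · rintro ⟨dX, dY⟩ hS
      have h1 := (hiff dX dY).mp hS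
      have hbd : bigVec dX dY = v0 := by
        have h2 := congrArg (fun u => (W + dW)⁻¹.mulVec u) h1
        simpa [Matrix.mulVec_mulVec, hSl, Matrix.one_mulVec, hv0] using h2
      refine Prod.ext ?_ ?_
      · funext k; ext i j
        have := congrFun hbd (k, 0, j, i)
        rwa [bigVec_zero] at this
      · funext k; ext i j
        have := congrFun hbd (k, 1, j, i)
        rwa [bigVec_one] at this
  · intro dX dY hS i
    have h1 := (hiff dX dY).mp hS
    set dz : BIdx m n p → ℝ := bigVec dX dY with hdz
    set r' : BIdx m n p → ℝ :=
      W⁻¹.mulVec (bigVec dE dF - dW.mulVec (bigVec X Y)) with hr'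
    have h2 : dz + M.mulVec dz = r' := by
      have h3 := congrArg (fun u => W⁻¹.mulVec u) h1
      simp only [Matrix.mulVec_mulVec] at h3
      rw [mul_add, hWl, ← hMdef, Matrix.add_mulVec, Matrix.one_mulVec] at h3
      exact h3
    have h3 : ∀ i, ((1 - N).mulVec fun j => |dz j|) i ≤ |r' i| := by
      intro i
      have hdzi : dz i = r' i - M.mulVec dz i := by
        have := congrFun h2 i
        simp only [Pi.add_apply] at this
        linarith
      have habs2 : |M.mulVec dz i| ≤ (N.mulVec fun j => |dz j|) i := by
        simp only [Matrix.mulVec, dotProduct]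
        calc |∑ j, M i j * dz j| ≤ ∑ j, |M i j * dz j| := Finset.abs_sum_le_sum_abs _ _
          _ = ∑ j, N i j * |dz j| := by
              refine Finset.sum_congr rfl fun j _ => ?_
              rw [abs_mul]; rfl
      have h4 : |dz i| ≤ |r' i| + (N.mulVec fun j => |dz j|) i := by
        rw [hdzi, sub_eq_add_neg]
        exact (abs_add_le _ _).trans (by rw [abs_neg]; exact add_le_add le_rfl habs2)
      rw [Matrix.sub_mulVec, Matrix.one_mulVec]
      simp only [Pi.sub_apply]
      linarith
    have h5 : (1 - N)⁻¹.mulVec ((1 - N).mulVec fun j => |dz j|) = fun j => |dz j| := by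
      rw [Matrix.mulVec_mulVec,
        Matrix.nonsing_inv_mul _ ((Matrix.isUnit_iff_isUnit_det _).mp h1N),
        Matrix.one_mulVec]
    calc |dz i| = ((1 - N)⁻¹.mulVec ((1 - N).mulVec fun j => |dz j|)) i :=
          (congrFun h5 i).symm
      _ ≤ ((1 - N)⁻¹.mulVec fun j => |r' j|) i := mulVec_mono hPnn h3 i
end
end

section
/- The set 𝒟 is open in ℝ^{2p(m²+n²+mn)}, and the map Ψ is Fréchet differentiable at every t ∈ 𝒟 with Fréchet derivative DΨ(t) = −W(t)⁻¹ H₂(t). -/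
open Matrix
open scoped Kronecker

noncomputable section

variable {m n p : ℕ}

set_option linter.unusedSectionVars false

section Aux
variable {m n p : ℕ} [NeZero p]

theorem Wt_add (t s : Fin p × CIdx m n → ℝ) : Wt (t + s) = Wt t + Wt s := by
  ext ⟨k, b, j, i⟩ ⟨k', b', j', i'⟩
  simp only [Wt, Wmat, Matrix.of_apply, Matrix.add_apply, Matrix.neg_apply,
    Matrix.kroneckerMap_apply, Matrix.transpose_apply, pA, pB, pC, pD, Pi.add_apply]
  split_ifs <;> ring

theorem Wt_smul (c : ℝ) (t : Fin p × CIdx m n → ℝ) : Wt (c • t) = c • Wt t := by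
  ext ⟨k, b, j, i⟩ ⟨k', b', j', i'⟩
  simp only [Wt, Wmat, Matrix.of_apply, Matrix.smul_apply, Matrix.neg_apply,
    Matrix.kroneckerMap_apply, Matrix.transpose_apply, pA, pB, pC, pD, Pi.smul_apply,
    smul_eq_mul]
  split_ifs <;> ring

theorem gt_add (t s : Fin p × CIdx m n → ℝ) : gt (t + s) = gt t + gt s := by
  funext ⟨k, b, j, i⟩
  simp only [gt, bigVec, vecM, pE, pF, Matrix.of_apply, Pi.add_apply]
  split_ifs <;> ring

theorem gt_smul (c : ℝ) (t : Fin p × CIdx m n → ℝ) : gt (c • t) = c • gt t := by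
  funext ⟨k, b, j, i⟩
  simp only [gt, bigVec, vecM, pE, pF, Matrix.of_apply, Pi.smul_apply, smul_eq_mul]
  split_ifs <;> ring

end Aux

set_option linter.unusedSectionVars false
set_option maxHeartbeats 2000000
section Key
variable {m n p : ℕ} [NeZero p]

theorem key (t h : Fin p × CIdx m n → ℝ) (x : BIdx m n p) :
    (H2t t *ᵥ h) x = ((Wt h) *ᵥ (Psi t)) x - gt h x := by
  obtain ⟨k, b, j, i⟩ := x
  fin_cases b <;>
  · simp only [H2t, Hmat, Wt, Wmat, gt, bigVec, vecM, pA, pB, pC, pD, pE, pF, Xsol, Ysol,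
      Matrix.mulVec, dotProduct, Matrix.of_apply, Matrix.kroneckerMap_apply,
      Matrix.transpose_apply, Matrix.neg_apply, Matrix.one_apply,
      Fintype.sum_prod_type, Fintype.sum_sum_type, Fin.sum_univ_two]
    simp only [Fin.zero_eta, Fin.mk_one, Pi.one_apply, one_mul, Fin.isValue]
    simp +decide only [ite_and, mul_ite, ite_mul, mul_zero, zero_mul, neg_mul, mul_neg,
      Finset.sum_add_distrib, Finset.sum_neg_distrib, Finset.sum_ite_eq, Finset.sum_ite_eq',
      Finset.mem_univ, if_true, Finset.sum_const_zero, Prod.mk.injEq, one_mul, mul_one,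
      if_false, and_true, true_and, add_zero, zero_add, neg_zero, Finset.sum_ite_irrel]
    simp only [ite_self, add_zero, zero_add, ite_mul, zero_mul, neg_mul, mul_ite, mul_zero,
      neg_zero, Finset.sum_ite_irrel, Finset.sum_neg_distrib, Finset.sum_const_zero,
      Finset.sum_ite_eq, Finset.sum_ite_eq', Finset.mem_univ, if_true, add_zero, zero_add]
    simp only [mul_comm]
    ring

end Key

attribute [local instance] Matrix.linftyOpNormedRing Matrix.linftyOpNormedAlgebra

section Main
variable {m n p : ℕ} [NeZero p]

/-- `Wt` as a continuous linear map. -/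
noncomputable def Wclm (m n p : ℕ) [NeZero p] :
    (Fin p × CIdx m n → ℝ) →L[ℝ] Matrix (BIdx m n p) (BIdx m n p) ℝ :=
  LinearMap.toContinuousLinearMap (IsLinearMap.mk' Wt ⟨Wt_add, Wt_smul⟩)

/-- `gt` as a continuous linear map. -/
noncomputable def gclm (m n p : ℕ) [NeZero p] :
    (Fin p × CIdx m n → ℝ) →L[ℝ] (BIdx m n p → ℝ) :=
  LinearMap.toContinuousLinearMap (IsLinearMap.mk' gt ⟨gt_add, gt_smul⟩)

@[simp] theorem Wclm_apply (t : Fin p × CIdx m n → ℝ) : Wclm m n p t = Wt t := rfl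
@[simp] theorem gclm_apply (t : Fin p × CIdx m n → ℝ) : gclm m n p t = gt t := rfl

/-- matrix-vector multiplication as a continuous bilinear map. -/
noncomputable def mvclm (m n p : ℕ) [NeZero p] :
    Matrix (BIdx m n p) (BIdx m n p) ℝ →L[ℝ] (BIdx m n p → ℝ) →L[ℝ] (BIdx m n p → ℝ) :=
  LinearMap.toContinuousLinearMap
    ((LinearMap.toContinuousLinearMap (E := BIdx m n p → ℝ)).toLinearMap.comp
      Matrix.toLin'.toLinearMap)

@[simp] theorem mvclm_apply (M : Matrix (BIdx m n p) (BIdx m n p) ℝ) (v : BIdx m n p → ℝ) :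
    mvclm m n p M v = M *ᵥ v := by
  simp [mvclm, Matrix.toLin'_apply]


end Main

/-- the set `𝒟` is open and `Ψ` is Fréchet differentiable on `𝒟` with
derivative `DΨ(t) = −W(t)⁻¹ H₂(t)`. -/
theorem Psi_hasFDerivAt (m n p : ℕ) [NeZero m] [NeZero n] [NeZero p] :
    IsOpen (Dset m n p) ∧
      ∀ t ∈ Dset m n p,
        HasFDerivAt Psi
          (LinearMap.toContinuousLinearMap
            (Matrix.mulVecLin (-((Wt t)⁻¹ * H2t t)))) t := by
  constructor
  · exact Units.isOpen.preimage (Wclm m n p).continuous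
  · intro t ht
    obtain ⟨u, hu⟩ := ht
    have hWd : HasFDerivAt Wt (Wclm m n p) t := (Wclm m n p).hasFDerivAt
    have hgd : HasFDerivAt gt (gclm m n p) t := (gclm m n p).hasFDerivAt
    have hinv : HasFDerivAt (fun s => Ring.inverse (Wt s))
        ((-(ContinuousLinearMap.mulLeftRight ℝ _ ↑u⁻¹ ↑u⁻¹)).comp (Wclm m n p)) t := by
      have h1 := hasFDerivAt_ringInverse (𝕜 := ℝ) u
      rw [hu] at h1
      exact h1.comp t hWd
    have hbil := (mvclm m n p).isBoundedBilinearMap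
    have hcomp := (hbil.hasFDerivAt (Ring.inverse (Wt t), gt t)).comp t (HasFDerivAt.prodMk hinv hgd)
    have hfun : (fun s : Fin p × CIdx m n → ℝ =>
        mvclm m n p (Ring.inverse (Wt s)) (gt s)) = Psi := by
      funext s
      simp [Psi, ← Matrix.nonsing_inv_eq_ringInverse]
    simp only [Function.comp_def] at hcomp
    replace hcomp := hcomp.congr_of_eventuallyEq (Filter.Eventually.of_forall fun s => (congrFun hfun s).symm)
    refine hcomp.congr_fderiv ?_
    ext h : 1
    have hui : (↑u⁻¹ : Matrix (BIdx m n p) (BIdx m n p) ℝ) = (Wt t)⁻¹ := by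
      rw [← hu, Matrix.coe_units_inv]
    have keyf : H2t t *ᵥ h = Wt h *ᵥ Psi t - gt h := funext fun x => key t h x
    simp only [ContinuousLinearMap.comp_apply, ContinuousLinearMap.prod_apply,
      hbil.deriv_apply, ContinuousLinearMap.neg_apply,
      ContinuousLinearMap.coe_coe, LinearMap.coe_toContinuousLinearMap',
      ContinuousLinearMap.mulLeftRight_apply, Wclm_apply, gclm_apply, mvclm_apply,
      Matrix.mulVecLin_apply, hui, ← Matrix.nonsing_inv_eq_ringInverse]
    conv_rhs => rw [Matrix.neg_mulVec, ← Matrix.mulVec_mulVec, keyf, Matrix.mulVec_sub, neg_sub]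
    simp [Psi, Matrix.mulVec_mulVec, sub_eq_add_neg, add_comm, Matrix.neg_mulVec, mul_assoc]
    erw [mvclm_apply, mvclm_apply]
    erw [ContinuousLinearMap.comp_apply, ContinuousLinearMap.neg_apply,
      ContinuousLinearMap.mulLeftRight_apply, Wclm_apply]
    simp [Matrix.mulVec_mulVec, Matrix.neg_mulVec, mul_assoc]
end
end
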